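/- arXiv:1902.09741 — 6 statements merged into one kernel-verified Lean document; each statement's English description precedes it below -/
import Mathlib

section
/- The number of admissible cyclic words of length 2n equals 2^{n-1} · (n-1)!. -/
/-- An admissible cyclic word of length `2n`: an arrangement of the letters
`1,…,n,1',…,n'` (encoded as `Fin n × Bool`, `false` = unprimed) on the `2n` cyclic
positions `ZMod (2n)`, each letter appearing exactly once, such that for each `i` the
letters `i` and `i'` are antipodal (exactly `n-1` letters between them). -/
def AdmWord (n : ℕ) : Type :=
  {w : ZMod (2 * n) ≃ Fin n × Bool //
    ∀ ℓ : Fin n, w.symm (ℓ, true) = w.symm (ℓ, false) + (n : ZMod (2 * n))}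

/-- Two cyclic words are identified iff they differ by a cyclic rotation. -/
def rotSetoid (n : ℕ) : Setoid (AdmWord n) where
  r w₁ w₂ := ∃ r : ZMod (2 * n), ∀ p, w₁.1 p = w₂.1 (p + r)
  iseqv := by
    refine ⟨fun w => ⟨0, fun p => by simp⟩, ?_, ?_⟩
    · rintro w₁ w₂ ⟨r, h⟩
      exact ⟨-r, fun p => by rw [h (p + -r)]; ring_nf⟩
    · rintro w₁ w₂ w₃ ⟨r, h⟩ ⟨r', h'⟩
      exact ⟨r + r', fun p => by rw [h p, h' (p + r), add_assoc]⟩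


section
variable {n : ℕ} [NeZero n]

instance neZeroTwoMul : NeZero (2 * n) := ⟨by have := NeZero.pos n; omega⟩

/-- pairing antipodal points of `ZMod (2*n)` -/
def pairEquiv (n : ℕ) [NeZero n] : ZMod n × Bool ≃ ZMod (2 * n) where
  toFun p := ((p.1.val + if p.2 then n else 0 : ℕ) : ZMod (2 * n))
  invFun y := (((y.val % n : ℕ) : ZMod n), decide (n ≤ y.val))
  left_inv := by
    rintro ⟨x, b⟩
    have hx : x.val < n := x.val_lt
    have hlt : x.val + (if b then n else 0) < 2 * n := by cases b <;> simp <;> omega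
    have hval : ((x.val + if b then n else 0 : ℕ) : ZMod (2 * n)).val
        = x.val + if b then n else 0 := ZMod.val_cast_of_lt hlt
    ext
    · simp only [hval]
      cases b <;> simp <;>
        rw [Nat.mod_eq_of_lt hx, ZMod.natCast_zmod_val]
    · simp only [hval]
      cases b <;> simp <;> omega
  right_inv := by
    intro y
    have hy : y.val < 2 * n := y.val_lt
    have h1 : (((y.val % n : ℕ) : ZMod n)).val = y.val % n := by
      rw [ZMod.val_natCast, Nat.mod_mod_of_dvd _ dvd_rfl]
    simp only [h1, decide_eq_true_eq]
    by_cases h : n ≤ y.val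
    · have : y.val % n = y.val - n := by
        rw [Nat.mod_eq_sub_mod h, Nat.mod_eq_of_lt (by omega)]
      rw [if_pos h, this]
      have : y.val - n + n = y.val := by omega
      rw [this, ZMod.natCast_zmod_val]
    · rw [if_neg h, Nat.mod_eq_of_lt (by omega), Nat.add_zero, ZMod.natCast_zmod_val]

lemma pairEquiv_not (x : ZMod n) (b : Bool) :
    pairEquiv n (x, !b) = pairEquiv n (x, b) + n := by
  have h2 : ((n : ZMod (2 * n))) * 2 = 0 := by
    have h := ZMod.natCast_self (2 * n)
    push_cast at h
    linear_combination h
  cases b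
  · show ((x.val + n : ℕ) : ZMod (2 * n)) = ((x.val + 0 : ℕ) : ZMod (2 * n)) + n
    push_cast; ring
  · show ((x.val + 0 : ℕ) : ZMod (2 * n)) = ((x.val + n : ℕ) : ZMod (2 * n)) + n
    push_cast; linear_combination -h2

lemma pairEquiv_false (x : ZMod n) :
    pairEquiv n (x, false) = (x.val : ZMod (2 * n)) := by
  show ((x.val + 0 : ℕ) : ZMod (2 * n)) = _
  push_cast; ring

end
section Word
variable {n : ℕ} [NeZero n]

/-- flip the Bool component according to ε -/
def mixEquiv (ε : Fin n → Bool) : Fin n × Bool ≃ Fin n × Bool where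
  toFun p := (p.1, xor p.2 (ε p.1))
  invFun p := (p.1, xor p.2 (ε p.1))
  left_inv p := by simp [Bool.xor_assoc]
  right_inv p := by simp [Bool.xor_assoc]

def mkWord (σ : Fin n ≃ ZMod n) (ε : Fin n → Bool) : AdmWord n :=
  ⟨((mixEquiv ε).trans ((σ.prodCongr (Equiv.refl Bool)).trans (pairEquiv n))).symm, by
    intro ℓ
    show pairEquiv n (σ ℓ, xor true (ε ℓ)) = pairEquiv n (σ ℓ, xor false (ε ℓ)) + n
    rw [Bool.true_xor, Bool.false_xor]
    exact pairEquiv_not (σ ℓ) (ε ℓ)⟩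

lemma mkWord_symm (σ : Fin n ≃ ZMod n) (ε : Fin n → Bool) (ℓ : Fin n) (b : Bool) :
    (mkWord σ ε).1.symm (ℓ, b) = pairEquiv n (σ ℓ, xor b (ε ℓ)) := rfl

end Word
section Rot
variable {n : ℕ} [NeZero n]

lemma rot_symm_eq (r : ZMod (2 * n)) (w : ZMod (2 * n) ≃ Fin n × Bool) (x : Fin n × Bool) :
    ((Equiv.addRight r).trans w).symm x = w.symm x - r := by
  simp [Equiv.symm_trans_apply, Equiv.addRight_symm_apply, sub_eq_add_neg]

def rotWord (r : ZMod (2 * n)) (w : AdmWord n) : AdmWord n :=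
  ⟨(Equiv.addRight r).trans w.1, by
    intro ℓ
    rw [rot_symm_eq, rot_symm_eq, w.2 ℓ]; ring⟩

lemma rotWord_apply (r : ZMod (2 * n)) (w : AdmWord n) (p : ZMod (2 * n)) :
    (rotWord r w).1 p = w.1 (p + r) := rfl

lemma rotWord_symm (r : ZMod (2 * n)) (w : AdmWord n) (x : Fin n × Bool) :
    (rotWord r w).1.symm x = w.1.symm x - r := rot_symm_eq r w.1 x

/-- normalized words: letter `(0,false)` sits at position `0` -/
def NormWord (n : ℕ) [NeZero n] : Type :=
  {w : AdmWord n // w.1.symm (0, false) = 0}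

def normWd (w : AdmWord n) : NormWord n :=
  ⟨rotWord (w.1.symm (0, false)) w, by rw [rotWord_symm]; ring⟩

def quotEquivNorm : Quotient (rotSetoid n) ≃ NormWord n where
  toFun := Quotient.lift normWd (by
    rintro w₁ w₂ ⟨r, h⟩
    have hsymm : ∀ x, w₂.1.symm x = w₁.1.symm x + r := by
      intro x
      apply w₂.1.injective
      rw [Equiv.apply_symm_apply, ← h, Equiv.apply_symm_apply]
    apply Subtype.ext; apply Subtype.ext; apply Equiv.ext
    intro p
    show w₁.1 (p + w₁.1.symm (0, false)) = w₂.1 (p + w₂.1.symm (0, false))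
    rw [hsymm (0, false), h, add_assoc]
  )
  invFun s := ⟦s.1⟧
  left_inv := by
    intro q
    induction q using Quotient.inductionOn with
    | h w =>
      simp only [Quotient.lift_mk]
      apply Quotient.sound
      exact ⟨w.1.symm (0, false), fun p => rfl⟩
  right_inv := by
    rintro ⟨w, hw⟩
    simp only [Quotient.lift_mk]
    apply Subtype.ext; apply Subtype.ext; apply Equiv.ext
    intro p
    show w.1 (p + w.1.symm (0, false)) = w.1 p
    rw [hw, add_zero]

end Rot
section Count
variable {n : ℕ} [NeZero n]

lemma pairEquiv_symm_def (y : ZMod (2 * n)) :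
    (pairEquiv n).symm y = ((((y.val % n : ℕ)) : ZMod n), decide (n ≤ y.val)) := rfl

def mkNorm (p : {σ : Fin n ≃ ZMod n // σ 0 = 0} × {ε : Fin n → Bool // ε 0 = false}) :
    NormWord n :=
  ⟨mkWord p.1.1 p.2.1, by
    rw [mkWord_symm, p.1.2, p.2.2]
    show pairEquiv n (0, false) = 0
    rw [pairEquiv_false, ZMod.val_zero, Nat.cast_zero]⟩

lemma mkNorm_injective :
    Function.Injective (mkNorm (n := n)) := by
  rintro ⟨σ₁, ε₁⟩ ⟨σ₂, ε₂⟩ h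
  have key : ∀ ℓ : Fin n, (σ₁.1 ℓ, ε₁.1 ℓ) = (σ₂.1 ℓ, ε₂.1 ℓ) := by
    intro ℓ
    apply (pairEquiv n).injective
    have h' := congrArg (fun s : NormWord n => s.1.1.symm (ℓ, false)) h
    simpa [mkNorm, mkWord_symm, Bool.false_xor] using h'
  have hσ : σ₁ = σ₂ :=
    Subtype.ext (Equiv.ext fun ℓ => (Prod.ext_iff.mp (key ℓ)).1)
  have hε : ε₁ = ε₂ :=
    Subtype.ext (funext fun ℓ => (Prod.ext_iff.mp (key ℓ)).2)
  rw [Prod.ext_iff]; exact ⟨hσ, hε⟩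

lemma mkNorm_surjective :
    Function.Surjective (mkNorm (n := n)) := by
  rintro ⟨w, hw⟩
  set f : Fin n → ZMod (2 * n) := fun ℓ => w.1.symm (ℓ, false) with hf
  set g : Fin n → ZMod n := fun ℓ => ((pairEquiv n).symm (f ℓ)).1 with hg
  have hginj : Function.Injective g := by
    intro ℓ₁ ℓ₂ hℓ
    have h1 : (f ℓ₁).val % n = (f ℓ₂).val % n := by
      have h2 : ((((f ℓ₁).val % n : ℕ)) : ZMod n) = (((f ℓ₂).val % n : ℕ) : ZMod n) := by
        simpa [hg, pairEquiv_symm_def] using hℓ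
      have h3 := congrArg ZMod.val h2
      rwa [ZMod.val_natCast, ZMod.val_natCast, Nat.mod_mod_of_dvd _ dvd_rfl,
        Nat.mod_mod_of_dvd _ dvd_rfl] at h3
    have m : ∀ ℓ, (f ℓ).val % n = (f ℓ).val ∨ (f ℓ).val % n + n = (f ℓ).val := by
      intro ℓ
      rcases Nat.lt_or_ge (f ℓ).val n with h | h
      · left; exact Nat.mod_eq_of_lt h
      · right
        rw [Nat.mod_eq_sub_mod h,
          Nat.mod_eq_of_lt (by have := ZMod.val_lt (f ℓ); omega)]
        omega
    have hval : (f ℓ₁).val = (f ℓ₂).val ∨ (f ℓ₁).val = (f ℓ₂).val + n ∨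
        (f ℓ₂).val = (f ℓ₁).val + n := by
      rcases m ℓ₁ with a | a <;> rcases m ℓ₂ with b | b <;> omega
    have cast2 : ∀ (a b : Fin n), (f a).val = (f b).val + n → False := by
      intro a b hab
      have h3 := congrArg (Nat.cast : ℕ → ZMod (2 * n)) hab
      rw [Nat.cast_add, ZMod.natCast_zmod_val, ZMod.natCast_zmod_val] at h3
      rw [show f b + (n : ZMod (2 * n)) = w.1.symm (b, true) from (w.2 b).symm] at h3
      have h4 := w.1.symm.injective (h3 : w.1.symm (a, false) = w.1.symm (b, true))
      simpa using h4
    rcases hval with h | h | h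
    · have h3 := congrArg (Nat.cast : ℕ → ZMod (2 * n)) h
      rw [ZMod.natCast_zmod_val, ZMod.natCast_zmod_val] at h3
      have h4 := w.1.symm.injective (h3 : w.1.symm (ℓ₁, false) = w.1.symm (ℓ₂, false))
      exact (Prod.ext_iff.mp h4).1
    · exact absurd h (fun hh => cast2 ℓ₁ ℓ₂ hh)
    · exact absurd h (fun hh => cast2 ℓ₂ ℓ₁ hh)
  have hgbij : Function.Bijective g := by
    rw [Fintype.bijective_iff_injective_and_card]
    exact ⟨hginj, by simp [ZMod.card]⟩
  set σ : Fin n ≃ ZMod n := Equiv.ofBijective g hgbij with hσdef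
  set ε : Fin n → Bool := fun ℓ => decide (n ≤ (f ℓ).val) with hε
  have hf0 : f 0 = 0 := hw
  have hσ0 : σ 0 = 0 := by
    show g 0 = 0
    rw [hg]
    show ((pairEquiv n).symm (f 0)).1 = 0
    rw [hf0, pairEquiv_symm_def]
    simp
  have hε0 : ε 0 = false := by
    rw [hε]
    simp only [hf0, ZMod.val_zero, decide_eq_false_iff_not]
    have := NeZero.pos n; omega
  refine ⟨⟨⟨σ, hσ0⟩, ⟨ε, hε0⟩⟩, ?_⟩
  have hsym : (mkWord σ ε).1.symm = w.1.symm := by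
    apply Equiv.ext
    rintro ⟨ℓ, b⟩
    have hfl : pairEquiv n (σ ℓ, ε ℓ) = f ℓ := by
      have h5 := (pairEquiv n).apply_symm_apply (f ℓ)
      rw [pairEquiv_symm_def] at h5
      exact h5
    cases b
    · rw [mkWord_symm, Bool.false_xor]
      exact hfl
    · rw [mkWord_symm, Bool.true_xor, pairEquiv_not, hfl]
      exact (w.2 ℓ).symm
  apply Subtype.ext; apply Subtype.ext
  show (mkWord σ ε).1 = w.1
  have h6 := congrArg Equiv.symm hsym
  simpa using h6

lemma card_normWord :
    Nat.card (NormWord n) =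
      Nat.card {σ : Fin n ≃ ZMod n // σ 0 = 0} * Nat.card {ε : Fin n → Bool // ε 0 = false} := by
  rw [← Nat.card_prod]
  exact Nat.card_congr (Equiv.ofBijective mkNorm ⟨mkNorm_injective, mkNorm_surjective⟩).symm

def sigmaProdEquiv : (Fin n ≃ ZMod n) ≃ {σ : Fin n ≃ ZMod n // σ 0 = 0} × ZMod n where
  toFun σ := (⟨σ.trans (Equiv.addRight (-(σ 0))), by
      simp [Equiv.trans_apply, Equiv.coe_addRight]⟩, σ 0)
  invFun p := p.1.1.trans (Equiv.addRight p.2)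
  left_inv σ := by
    apply Equiv.ext; intro x
    simp [Equiv.trans_apply, Equiv.coe_addRight]
  right_inv := by
    rintro ⟨⟨τ, hτ⟩, c⟩
    refine Prod.ext ?_ ?_
    · apply Subtype.ext; apply Equiv.ext; intro x
      simp [Equiv.trans_apply, Equiv.coe_addRight, hτ]
    · simp [Equiv.trans_apply, Equiv.coe_addRight, hτ]

def epsProdEquiv : (Fin n → Bool) ≃ {ε : Fin n → Bool // ε 0 = false} × Bool where
  toFun ε := (⟨fun i => if i = 0 then false else ε i, by simp⟩, ε 0)
  invFun p := fun i => if i = 0 then p.2 else p.1.1 i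
  left_inv ε := by
    funext i
    by_cases h : i = 0 <;> simp [h]
  right_inv := by
    rintro ⟨⟨τ, hτ⟩, c⟩
    refine Prod.ext ?_ ?_
    · apply Subtype.ext; funext i
      by_cases h : i = 0 <;> simp [h, hτ.symm]
    · simp

lemma card_sigmaSub : Nat.card {σ : Fin n ≃ ZMod n // σ 0 = 0} = (n - 1).factorial := by
  have e : Fin n ≃ ZMod n := (Fintype.equivFinOfCardEq (ZMod.card n)).symm
  have h1 : Nat.card (Fin n ≃ ZMod n) = n.factorial := by
    rw [Nat.card_eq_fintype_card, Fintype.card_equiv e, Fintype.card_fin]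
  have h2 : Nat.card (Fin n ≃ ZMod n) =
      Nat.card {σ : Fin n ≃ ZMod n // σ 0 = 0} * n := by
    rw [Nat.card_congr (sigmaProdEquiv (n := n)), Nat.card_prod,
      Nat.card_eq_fintype_card (α := ZMod n), ZMod.card]
  have h3 : n * (n - 1).factorial = n.factorial := Nat.mul_factorial_pred (NeZero.ne n)
  have hn := NeZero.pos n
  apply Nat.eq_of_mul_eq_mul_right hn
  rw [h2.symm.trans h1, ← h3, mul_comm]

lemma card_epsSub : Nat.card {ε : Fin n → Bool // ε 0 = false} = 2 ^ (n - 1) := by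
  have hn := NeZero.pos n
  have hn' : n - 1 + 1 = n := by omega
  have h1 : Nat.card (Fin n → Bool) = 2 ^ n := by
    rw [Nat.card_eq_fintype_card, Fintype.card_fun, Fintype.card_bool, Fintype.card_fin]
  have h2 : Nat.card (Fin n → Bool) =
      Nat.card {ε : Fin n → Bool // ε 0 = false} * 2 := by
    rw [Nat.card_congr (epsProdEquiv (n := n)), Nat.card_prod,
      Nat.card_eq_fintype_card (α := Bool), Fintype.card_bool]
  apply Nat.eq_of_mul_eq_mul_right (show 0 < 2 by norm_num)
  rw [← h2, h1]
  conv_lhs => rw [← hn']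
  rw [pow_succ]

end Count

/-- the number of admissible cyclic words of length `2n`
equals `2^{n-1} · (n-1)!`. -/
theorem card_admissible_cyclic_words (n : ℕ) (hn : 1 ≤ n) :
    Nat.card (Quotient (rotSetoid n)) = 2 ^ (n - 1) * Nat.factorial (n - 1) := by
  haveI : NeZero n := ⟨by omega⟩
  rw [Nat.card_congr (quotEquivNorm (n := n)), card_normWord, card_sigmaSub, card_epsSub,
    mul_comm]
end

section
/- Let Γ: I → Lo_n^1 be flag-convex, meaning Γ(t)⁻¹ Γ'(t) has strictly positive entries in positions (j+1, j) and zero entries elsewhere for all t. Let P_η be the permutation matrix of the top permutation η, with (P_η)_{i, n+1-i} = 1. Then the curve Γ_⋆(t) = P_η (Γ(-t))^{-⊤} P_η also takes values in Lo_n^1 and is flag-convex. -/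
open Matrix

variable (n : ℕ)

/-- Lower triangular with unit diagonal (`Lo_n^1`). -/
def unitri (L : Matrix (Fin n) (Fin n) ℝ) : Prop :=
  (∀ i, L i i = 1) ∧ ∀ i j : Fin n, (i : ℕ) < (j : ℕ) → L i j = 0

/-- The set `𝒥`: strictly positive entries on the subdiagonal, zero elsewhere. -/
def inJ (A : Matrix (Fin n) (Fin n) ℝ) : Prop :=
  ∀ i j : Fin n, ((i : ℕ) = (j : ℕ) + 1 → 0 < A i j) ∧ ((i : ℕ) ≠ (j : ℕ) + 1 → A i j = 0)

/-- The permutation matrix of the top permutation: `(P_η)_{i, n+1-i} = 1`. -/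
def Peta : Matrix (Fin n) (Fin n) ℝ :=
  Matrix.of fun i j => if (i : ℕ) + (j : ℕ) + 1 = n then 1 else 0

section AuxAnalysis

attribute [local instance] Matrix.linftyOpNormedRing Matrix.linftyOpNormedAlgebra

private def entryLM (i j : Fin n) : Matrix (Fin n) (Fin n) ℝ →ₗ[ℝ] ℝ where
  toFun M := M i j
  map_add' _ _ := rfl
  map_smul' _ _ := rfl

private lemma hasDerivAt_matrix {f : ℝ → Matrix (Fin n) (Fin n) ℝ}
    {f' : Matrix (Fin n) (Fin n) ℝ} {t : ℝ}
    (h : ∀ i j, HasDerivAt (fun s => f s i j) (f' i j) t) : HasDerivAt f f' t := by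
  have e : f = fun s => ∑ i : Fin n, ∑ j : Fin n, Matrix.single i j (f s i j) := by
    funext s; exact Matrix.matrix_eq_sum_single (f s)
  rw [e, Matrix.matrix_eq_sum_single f']
  apply HasDerivAt.fun_sum; intro i _
  apply HasDerivAt.fun_sum; intro j _
  have := (h i j).smul_const (Matrix.single i j (1:ℝ))
  simpa [Matrix.smul_single] using this

lemma hasDerivAt_inv_entries (f : ℝ → Matrix (Fin n) (Fin n) ℝ)
    (f' : Matrix (Fin n) (Fin n) ℝ) (t : ℝ)
    (hf : ∀ i j, HasDerivAt (fun s => f s i j) (f' i j) t) (hu : IsUnit (f t).det) :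
    ∀ i j, HasDerivAt (fun s => (f s)⁻¹ i j)
      ((-((f t)⁻¹ * f' * (f t)⁻¹)) i j) t := by
  have hF : HasDerivAt f f' t := hasDerivAt_matrix n hf
  have hu' : IsUnit (f t) := (Matrix.isUnit_iff_isUnit_det _).mpr hu
  have hfd : HasFDerivAt Ring.inverse
      (-(ContinuousLinearMap.mulLeftRight ℝ (Matrix (Fin n) (Fin n) ℝ)
        ↑hu'.unit⁻¹ ↑hu'.unit⁻¹)) (f t) := by
    have := hasFDerivAt_ringInverse (𝕜 := ℝ) hu'.unit
    rwa [hu'.unit_spec] at this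
  have hcoe : (↑hu'.unit⁻¹ : Matrix (Fin n) (Fin n) ℝ) = (f t)⁻¹ := by
    rw [Matrix.coe_units_inv, hu'.unit_spec]
  have h1 : HasDerivAt (fun s => Ring.inverse (f s))
      (-((f t)⁻¹ * f' * (f t)⁻¹)) t := by
    have := hfd.comp_hasDerivAt t hF
    simp [hcoe] at this
    exact this
  simp only [← Matrix.nonsing_inv_eq_ringInverse] at h1
  intro i j
  have := ((entryLM n i j).toContinuousLinearMap.hasFDerivAt).comp_hasDerivAt t h1
  exact this

end AuxAnalysis

lemma peta_apply (i j : Fin n) : Peta n i j = if j = Fin.rev i then 1 else 0 := by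
  have h : ((i : ℕ) + (j : ℕ) + 1 = n) ↔ (j = Fin.rev i) := by
    rw [Fin.ext_iff, Fin.val_rev]
    have := i.isLt; have := j.isLt
    omega
  simp only [Peta, Matrix.of_apply, h]

lemma peta_mul (M : Matrix (Fin n) (Fin n) ℝ) (i j : Fin n) :
    (Peta n * M) i j = M (Fin.rev i) j := by
  rw [Matrix.mul_apply]
  simp only [peta_apply, ite_mul, one_mul, zero_mul]
  simp [Finset.sum_ite_eq']

lemma mul_peta (M : Matrix (Fin n) (Fin n) ℝ) (i j : Fin n) :
    (M * Peta n) i j = M i (Fin.rev j) := by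
  rw [Matrix.mul_apply]
  have h : ∀ k : Fin n, Peta n k j = if k = Fin.rev j then 1 else 0 := by
    intro k
    rw [peta_apply]
    congr 1
    rw [eq_iff_iff]
    constructor
    · rintro rfl; rw [Fin.rev_rev]
    · rintro rfl; rw [Fin.rev_rev]
  simp only [h, mul_ite, mul_one, mul_zero]
  simp [Finset.sum_ite_eq']

lemma peta_conj (M : Matrix (Fin n) (Fin n) ℝ) (i j : Fin n) :
    (Peta n * M * Peta n) i j = M (Fin.rev i) (Fin.rev j) := by
  rw [mul_peta, peta_mul]

lemma peta_mul_peta : Peta n * Peta n = 1 := by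
  ext i j
  rw [peta_mul, peta_apply, Fin.rev_rev, Matrix.one_apply]
  simp [eq_comm]

lemma mul_conj_mul_conj {P A B : Matrix (Fin n) (Fin n) ℝ} (hP : P * P = 1) :
    (P * A * P) * (P * B * P) = P * (A * B) * P := by
  calc (P * A * P) * (P * B * P) = P * (A * ((P * P) * (B * P))) := by
        simp only [Matrix.mul_assoc]
    _ = P * (A * B) * P := by
        rw [hP, one_mul, ← Matrix.mul_assoc, ← Matrix.mul_assoc, Matrix.mul_assoc P A B]

lemma unitri_det {L : Matrix (Fin n) (Fin n) ℝ} (h : unitri n L) : L.det = 1 := by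
  rw [Matrix.det_of_lowerTriangular L (fun i j hij => h.2 i j hij)]
  simp [h.1]

lemma unitri_inv {L : Matrix (Fin n) (Fin n) ℝ} (h : unitri n L) : unitri n L⁻¹ := by
  have hdet : IsUnit L.det := by rw [unitri_det n h]; exact isUnit_one
  haveI : Invertible L := L.invertibleOfIsUnitDet hdet
  have htri : BlockTriangular L⁻¹ OrderDual.toDual :=
    Matrix.blockTriangular_inv_of_blockTriangular (fun i j hij => h.2 i j hij)
  refine ⟨fun i => ?_, fun i j hij => htri hij⟩
  have h1 : (L⁻¹ * L) i i = 1 := by rw [Matrix.nonsing_inv_mul L hdet, Matrix.one_apply_eq]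
  rw [Matrix.mul_apply, Finset.sum_eq_single i] at h1
  · simpa [h.1 i] using h1
  · intro k _ hk
    rcases lt_or_gt_of_ne hk with hlt | hgt
    · rw [h.2 k i hlt, mul_zero]
    · rw [htri (show OrderDual.toDual k < OrderDual.toDual i from hgt), zero_mul]
  · intro hi; exact absurd (Finset.mem_univ i) hi

/-- if `Γ : I → Lo_n^1` is flag-convex then so is
`Γ_⋆(t) = P_η (Γ(-t))^{-⊤} P_η` (defined on `-I`), with values in `Lo_n^1`. -/
theorem dual_curve_flag_convex (I : Set ℝ)
    (Γ Γ' : ℝ → Matrix (Fin n) (Fin n) ℝ)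
    (hL : ∀ t ∈ I, unitri n (Γ t))
    (hderiv : ∀ t ∈ I, ∀ i j : Fin n, HasDerivAt (fun s => Γ s i j) (Γ' t i j) t)
    (hconv : ∀ t ∈ I, inJ n ((Γ t)⁻¹ * Γ' t)) :
    ∃ D : ℝ → Matrix (Fin n) (Fin n) ℝ,
      ∀ t : ℝ, -t ∈ I →
        unitri n (Peta n * ((Γ (-t))⁻¹)ᵀ * Peta n) ∧
        (∀ i j : Fin n,
          HasDerivAt (fun s => (Peta n * ((Γ (-s))⁻¹)ᵀ * Peta n) i j) (D t i j) t) ∧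
        inJ n ((Peta n * ((Γ (-t))⁻¹)ᵀ * Peta n)⁻¹ * D t) := by
  refine ⟨fun t => Peta n * ((Γ (-t))⁻¹ * Γ' (-t) * (Γ (-t))⁻¹)ᵀ * Peta n, fun t ht => ?_⟩
  have hu : unitri n (Γ (-t)) := hL (-t) ht
  have hdet : IsUnit (Γ (-t)).det := by rw [unitri_det n hu]; exact isUnit_one
  have hNu : unitri n (Γ (-t))⁻¹ := unitri_inv n hu
  refine ⟨?_, ?_, ?_⟩
  · -- unitri of the dual curve
    constructor
    · intro i
      rw [peta_conj, Matrix.transpose_apply]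
      exact hNu.1 _
    · intro i j hij
      rw [peta_conj, Matrix.transpose_apply]
      apply hNu.2
      rw [Fin.val_rev, Fin.val_rev]
      have := i.isLt; have := j.isLt
      omega
  · -- derivative
    have hentry : ∀ i j, HasDerivAt (fun s => Γ (-s) i j) ((-Γ' (-t)) i j) t := by
      intro i j
      have := (hderiv (-t) ht i j).comp t (hasDerivAt_neg t)
      simpa [Function.comp_def, mul_neg_one] using this
    have h0 := hasDerivAt_inv_entries n (fun s => Γ (-s)) (-Γ' (-t)) t hentry hdet
    have hNder : ∀ i j, HasDerivAt (fun s => (Γ (-s))⁻¹ i j)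
        (((Γ (-t))⁻¹ * Γ' (-t) * (Γ (-t))⁻¹) i j) t := by
      intro i j
      have heq : -((Γ (-t))⁻¹ * -Γ' (-t) * (Γ (-t))⁻¹)
          = (Γ (-t))⁻¹ * Γ' (-t) * (Γ (-t))⁻¹ := by
        simp [Matrix.mul_neg, Matrix.neg_mul]
      have := h0 i j
      rwa [heq] at this
    intro i j
    have := hNder (Fin.rev j) (Fin.rev i)
    simpa only [peta_conj, Matrix.transpose_apply] using this
  · -- flag convexity
    have hPP := peta_mul_peta n
    have hstar_inv : (Peta n * ((Γ (-t))⁻¹)ᵀ * Peta n)⁻¹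
        = Peta n * (Γ (-t))ᵀ * Peta n := by
      rw [Matrix.mul_inv_rev, Matrix.mul_inv_rev, Matrix.inv_eq_right_inv hPP,
        Matrix.transpose_nonsing_inv,
        Matrix.nonsing_inv_nonsing_inv _ (by rwa [Matrix.det_transpose]), mul_assoc]
    rw [hstar_inv]
    have key : (Peta n * (Γ (-t))ᵀ * Peta n)
          * (Peta n * ((Γ (-t))⁻¹ * Γ' (-t) * (Γ (-t))⁻¹)ᵀ * Peta n)
        = Peta n * ((Γ (-t))⁻¹ * Γ' (-t))ᵀ * Peta n := by
      have hXL : (Γ (-t))⁻¹ * Γ' (-t) * (Γ (-t))⁻¹ * Γ (-t) = (Γ (-t))⁻¹ * Γ' (-t) := by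
        rw [mul_assoc, Matrix.nonsing_inv_mul _ hdet, mul_one]
      rw [mul_conj_mul_conj n hPP, ← Matrix.transpose_mul, hXL]
    rw [key]
    have hA := hconv (-t) ht
    intro i j
    have hi := i.isLt; have hj := j.isLt
    constructor
    · intro hij
      rw [peta_conj, Matrix.transpose_apply]
      apply (hA (Fin.rev j) (Fin.rev i)).1
      rw [Fin.val_rev, Fin.val_rev]; omega
    · intro hij
      rw [peta_conj, Matrix.transpose_apply]
      apply (hA (Fin.rev j) (Fin.rev i)).2
      rw [Fin.val_rev, Fin.val_rev]; omega
end

section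
/- A matrix L ∈ Lo_n^1 is totally negative if and only if L⁻¹ is totally positive. -/
open Matrix

variable (n : ℕ)

/-- `L` is totally positive in `Lo_n^1`. -/
def totPos (L : Matrix (Fin n) (Fin n) ℝ) : Prop :=
  unitri n L ∧
  ∀ (k : ℕ) (r c : Fin k → Fin n), StrictMono r → StrictMono c →
    (∃ M : Matrix (Fin n) (Fin n) ℝ, unitri n M ∧ (M.submatrix r c).det ≠ 0) →
    0 < (L.submatrix r c).det

/-- The diagonal matrix `P = diag(1, -1, 1, …, (-1)^{n-1})`. -/
def Pdiag : Matrix (Fin n) (Fin n) ℝ :=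
  Matrix.diagonal fun i => (-1 : ℝ) ^ (i : ℕ)

/-- `L` is totally negative: `P L P` is totally positive. -/
def totNeg (L : Matrix (Fin n) (Fin n) ℝ) : Prop :=
  totPos n (Pdiag n * L * Pdiag n)



namespace TNaux

open Finset Equiv

variable {n k : ℕ}

lemma ut_blockTri {L : Matrix (Fin n) (Fin n) ℝ} (h : unitri n L) :
    L.BlockTriangular OrderDual.toDual := fun i j hij => h.2 i j hij

lemma ut_det {L : Matrix (Fin n) (Fin n) ℝ} (h : unitri n L) : L.det = 1 := by
  rw [Matrix.det_of_lowerTriangular L (ut_blockTri h)]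
  simp [h.1]

lemma ut_isUnitDet {L : Matrix (Fin n) (Fin n) ℝ} (h : unitri n L) : IsUnit L.det := by
  rw [ut_det h]; exact isUnit_one

noncomputable def ut_invertible {L : Matrix (Fin n) (Fin n) ℝ} (h : unitri n L) :
    Invertible L := L.invertibleOfIsUnitDet (ut_isUnitDet h)

lemma ut_inv {L : Matrix (Fin n) (Fin n) ℝ} (h : unitri n L) : unitri n L⁻¹ := by
  letI := (ut_invertible h)
  have hbt : L⁻¹.BlockTriangular OrderDual.toDual :=
    blockTriangular_inv_of_blockTriangular (ut_blockTri h)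
  refine ⟨fun i => ?_, fun i j hij => hbt hij⟩
  have h1 : (L * L⁻¹) i i = 1 := by rw [Matrix.mul_nonsing_inv L (ut_isUnitDet h)]; simp
  rw [Matrix.mul_apply] at h1
  rw [Finset.sum_eq_single i] at h1
  · rw [h.1 i, one_mul] at h1; exact h1
  · intro b _ hb
    rcases lt_or_gt_of_ne (fun e => hb (Fin.ext e) : (b:ℕ) ≠ (i:ℕ)) with hlt | hgt
    · rw [hbt (show OrderDual.toDual i < OrderDual.toDual b from hlt), mul_zero]
    · rw [h.2 i b hgt, zero_mul]
  · simp



lemma block_jacobi {m p : Type*} [Fintype m] [Fintype p] [DecidableEq m] [DecidableEq p]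
    (A : Matrix (m ⊕ p) (m ⊕ p) ℝ) (hA : IsUnit A.det) :
    A.det * ((A⁻¹).toBlocks₁₁).det = (A.toBlocks₂₂).det := by
  set B := A⁻¹ with hB
  have h1 : A * B = 1 := Matrix.mul_nonsing_inv A hA
  have h := h1
  rw [← fromBlocks_toBlocks A, ← fromBlocks_toBlocks B, fromBlocks_multiply] at h
  have e11 : (1 : Matrix (m ⊕ p) (m ⊕ p) ℝ).toBlocks₁₁ = 1 := by
    ext i j; simp [Matrix.toBlocks₁₁, Matrix.one_apply]
  have e21 : (1 : Matrix (m ⊕ p) (m ⊕ p) ℝ).toBlocks₂₁ = 0 := by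
    ext i j; simp [Matrix.toBlocks₂₁, Matrix.one_apply]
  have h11 : A.toBlocks₁₁ * B.toBlocks₁₁ + A.toBlocks₁₂ * B.toBlocks₂₁ = 1 := by
    simpa [e11] using congrArg Matrix.toBlocks₁₁ h
  have h21 : A.toBlocks₂₁ * B.toBlocks₁₁ + A.toBlocks₂₂ * B.toBlocks₂₁ = 0 := by
    simpa [e21] using congrArg Matrix.toBlocks₂₁ h
  have key : A * fromBlocks (B.toBlocks₁₁) 0 (B.toBlocks₂₁) 1
      = fromBlocks 1 (A.toBlocks₁₂) 0 (A.toBlocks₂₂) := by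
    conv_lhs => rw [← fromBlocks_toBlocks A]
    rw [fromBlocks_multiply]
    rw [h11, h21]
    congr 1 <;> simp
  have hd := congrArg Matrix.det key
  rw [det_mul, det_fromBlocks_zero₁₂, det_fromBlocks_zero₂₁] at hd
  simpa using hd

lemma inv_submatrix {N : Type*} [Fintype N] [DecidableEq N] (L : Matrix (Fin n) (Fin n) ℝ)
    (hL : IsUnit L.det) (e f : N ≃ Fin n) :
    (L.submatrix ⇑f ⇑e)⁻¹ = L⁻¹.submatrix ⇑e ⇑f := by
  refine inv_eq_right_inv ?_
  rw [submatrix_mul_equiv, Matrix.mul_nonsing_inv _ hL, submatrix_one_equiv]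



/-- The range of `a` as a `Finset`. -/
abbrev rng (a : Fin k → Fin n) : Finset (Fin n) := Finset.univ.image a

lemma card_compl_rng (a : Fin k → Fin n) (ha : StrictMono a) : ((rng a)ᶜ).card = n - k := by
  rw [Finset.card_compl, rng, Finset.card_image_of_injective _ ha.injective]
  simp

/-- The strictly monotone enumeration of the complement of the range of `a`. -/
noncomputable def compl (a : Fin k → Fin n) (ha : StrictMono a) : Fin (n - k) → Fin n :=
  ((rng a)ᶜ).orderEmbOfFin (card_compl_rng a ha)

lemma compl_strictMono (a : Fin k → Fin n) (ha : StrictMono a) : StrictMono (compl a ha) :=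
  (((rng a)ᶜ).orderEmbOfFin (card_compl_rng a ha)).strictMono

lemma compl_mem (a : Fin k → Fin n) (ha : StrictMono a) (j : Fin (n - k)) :
    compl a ha j ∈ (rng a)ᶜ :=
  Finset.orderEmbOfFin_mem _ _ _

lemma rng_compl (a : Fin k → Fin n) (ha : StrictMono a) :
    rng (compl a ha) = (rng a)ᶜ := by
  apply Finset.coe_injective
  rw [rng, Finset.coe_image, Finset.coe_univ, Set.image_univ]
  exact Finset.range_orderEmbOfFin _ _

/-- Strictly monotone maps with the same finite range are equal. -/
lemma strictMono_unique {m : ℕ} (u v : Fin m → Fin n) (hu : StrictMono u) (hv : StrictMono v)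
    (h : rng u = rng v) : u = v := by
  have hr : Set.range u = Set.range v := by
    have := congrArg (fun s : Finset (Fin n) => (s : Set (Fin n))) h
    simpa [rng, Finset.coe_image, Set.image_univ] using this
  haveI : WellFoundedLT (Fin m) := Finite.to_wellFoundedLT
  exact (StrictMono.range_inj hu hv).mp hr

lemma compl_compl' (a : Fin k → Fin n) (ha : StrictMono a) (hkn : k ≤ n) :
    compl (compl a ha) (compl_strictMono a ha)
      = fun j => a (Fin.cast (by omega) j) := by
  apply strictMono_unique _ _ (compl_strictMono _ _)
  · intro i j hij
    exact ha hij
  · rw [rng_compl, rng_compl, compl_compl]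
    apply Finset.coe_injective
    simp only [rng, Finset.coe_image, Finset.coe_univ, Set.image_univ]
    ext x
    constructor
    · rintro ⟨i, rfl⟩; exact ⟨Fin.cast (by omega) i, rfl⟩
    · rintro ⟨j, rfl⟩; exact ⟨Fin.cast (by omega) j, rfl⟩

lemma sum_add_sum_compl (a : Fin k → Fin n) (ha : StrictMono a) :
    ((∑ i, ((a i : ℕ))) + ∑ j, ((compl a ha j : ℕ))) = ∑ x : Fin n, (x : ℕ) := by
  have h1 : ∑ i, ((a i : ℕ)) = ∑ x ∈ rng a, (x : ℕ) := by
    rw [rng, Finset.sum_image]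
    intro i _ j _ hij
    exact ha.injective hij
  have h2 : ∑ j, ((compl a ha j : ℕ)) = ∑ x ∈ (rng a)ᶜ, (x : ℕ) := by
    rw [← rng_compl a ha, rng, Finset.sum_image]
    intro i _ j _ hij
    exact (compl_strictMono a ha).injective hij
  rw [h1, h2, Finset.sum_add_sum_compl]




lemma card_compl_rng' (a : Fin k → Fin n) (ha : StrictMono a) :
    ((rng a)ᶜ).card = n - k := card_compl_rng a ha

lemma compl_eq_orderEmbOfFin (a : Fin k → Fin n) (ha : StrictMono a)
    (h : ((rng a)ᶜ : Finset (Fin n)).card = n - k) :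
    compl a ha = ((rng a)ᶜ).orderEmbOfFin h := rfl

lemma le_apply_aux (a : Fin k → Fin n) (ha : StrictMono a) : ∀ i : Fin k, (i : ℕ) ≤ (a i : ℕ) := by
  intro i
  induction' hi : (i : ℕ) with m IH generalizing i
  · omega
  · have hm : m < k := by omega
    have hlt : (⟨m, hm⟩ : Fin k) < i := by simp [Fin.lt_def, hi]
    have h2 := ha hlt
    have h3 := IH ⟨m, hm⟩ rfl
    simp only [Fin.lt_def] at h2
    omega

lemma a_ne_compl (a : Fin k → Fin n) (ha : StrictMono a) (i : Fin k) (j : Fin (n - k)) :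
    a i ≠ compl a ha j := by
  intro h
  have hmem := compl_mem a ha j
  rw [Finset.mem_compl] at hmem
  exact hmem (h ▸ Finset.mem_image_of_mem a (Finset.mem_univ i))

/-- The bijection `Fin k ⊕ Fin (n-k) ≃ Fin n` given by `a` and its complement. -/
noncomputable def eqv (a : Fin k → Fin n) (ha : StrictMono a) (hkn : k ≤ n) :
    Fin k ⊕ Fin (n - k) ≃ Fin n :=
  Equiv.ofBijective (Sum.elim a (compl a ha)) (by
    rw [Fintype.bijective_iff_injective_and_card]
    refine ⟨?_, by simp; omega⟩
    intro x y hxy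
    match x, y with
    | Sum.inl i, Sum.inl i' => exact congrArg _ (ha.injective hxy)
    | Sum.inl i, Sum.inr j => exact absurd hxy (a_ne_compl a ha i j)
    | Sum.inr j, Sum.inl i => exact absurd hxy.symm (a_ne_compl a ha i j)
    | Sum.inr j, Sum.inr j' => exact congrArg _ ((compl_strictMono a ha).injective hxy))

@[simp] lemma eqv_inl (a : Fin k → Fin n) (ha : StrictMono a) (hkn : k ≤ n) (i : Fin k) :
    eqv a ha hkn (Sum.inl i) = a i := rfl

@[simp] lemma eqv_inr (a : Fin k → Fin n) (ha : StrictMono a) (hkn : k ≤ n) (j : Fin (n - k)) :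
    eqv a ha hkn (Sum.inr j) = compl a ha j := rfl

/-- The canonical bijection `Fin k ⊕ Fin (n-k) ≃ Fin n`. -/
def sumEquiv (hkn : k ≤ n) : Fin k ⊕ Fin (n - k) ≃ Fin n :=
  finSumFinEquiv.trans (finCongr (by omega))

@[simp] lemma sumEquiv_inl (hkn : k ≤ n) (i : Fin k) :
    ((sumEquiv hkn (Sum.inl i) : Fin n) : ℕ) = (i : ℕ) := by
  simp [sumEquiv]

@[simp] lemma sumEquiv_inr (hkn : k ≤ n) (j : Fin (n - k)) :
    ((sumEquiv hkn (Sum.inr j) : Fin n) : ℕ) = k + (j : ℕ) := by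
  simp [sumEquiv]

/-- The shuffle permutation of `Fin n` determined by `a`. -/
noncomputable def permOf (a : Fin k → Fin n) (ha : StrictMono a) (hkn : k ≤ n) :
    Equiv.Perm (Fin n) :=
  (sumEquiv hkn).symm.trans (eqv a ha hkn)

lemma sign_permOf (hkn : k ≤ n) :
    ∀ (N : ℕ) (a : Fin k → Fin n) (ha : StrictMono a), (∑ i, ((a i : ℕ))) = N →
    (Equiv.Perm.sign (permOf a ha hkn) : ℤ) = (-1) ^ (N + ∑ i : Fin k, (i : ℕ)) := by
  intro N
  induction N using Nat.strong_induction_on with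
  | _ N IH =>
    intro a ha hN
    by_cases hall : ∀ i : Fin k, (a i : ℕ) = (i : ℕ)
    · -- base case : `a` is the canonical inclusion
      have hcompl : compl a ha = fun j => sumEquiv hkn (Sum.inr j) := by
        rw [compl_eq_orderEmbOfFin a ha (card_compl_rng' a ha)]
        refine (Finset.orderEmbOfFin_unique (card_compl_rng' a ha) ?_ ?_).symm
        · intro j
          rw [Finset.mem_compl]
          intro hmem
          obtain ⟨i, _, hi⟩ := Finset.mem_image.mp hmem
          have := congrArg (fun z : Fin n => (z : ℕ)) hi
          simp only [hall i, sumEquiv_inr] at this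
          omega
        · intro u v huv
          have h' : (u : ℕ) < (v : ℕ) := huv
          rw [Fin.lt_def, sumEquiv_inr hkn, sumEquiv_inr hkn]
          omega
      have heqv : eqv a ha hkn = sumEquiv hkn := by
        apply Equiv.ext
        rintro (i | j)
        · apply Fin.ext
          simp [hall i]
        · simp [hcompl]
      have hperm : permOf a ha hkn = Equiv.refl _ := by
        rw [permOf, heqv, Equiv.symm_trans_self]
      have hNval : N = ∑ i : Fin k, (i : ℕ) := by
        rw [← hN]; exact Finset.sum_congr rfl fun i _ => hall i
      rw [hperm, hNval]
      simp [Even.neg_one_pow ⟨∑ i : Fin k, (i : ℕ), rfl⟩]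
    · -- step case
      push_neg at hall
      obtain ⟨i₁, hi₁⟩ := hall
      have hne : (Finset.univ.filter fun i : Fin k => (i : ℕ) < (a i : ℕ)).Nonempty := by
        refine ⟨i₁, ?_⟩
        simp only [Finset.mem_filter, Finset.mem_univ, true_and]
        exact lt_of_le_of_ne (le_apply_aux a ha i₁) (Ne.symm hi₁)
      obtain ⟨i₀, hi₀mem, hi₀min⟩ := Finset.exists_min_image _ id hne
      simp only [Finset.mem_filter, Finset.mem_univ, true_and] at hi₀mem
      have hmin : ∀ j : Fin k, (j : ℕ) < (a j : ℕ) → i₀ ≤ j := by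
        intro j hj
        exact hi₀min j (by simp [hj])
      have heqbelow : ∀ j : Fin k, j < i₀ → (a j : ℕ) = (j : ℕ) := by
        intro j hj
        refine le_antisymm ?_ (le_apply_aux a ha j)
        by_contra hcon
        exact absurd (hmin j (by omega)) (not_le.mpr hj)
      set x : Fin n := a i₀ with hx
      have hxpos : (i₀ : ℕ) < (x : ℕ) := hi₀mem
      have hxlt : (x : ℕ) < n := x.isLt
      set x' : Fin n := ⟨(x : ℕ) - 1, by omega⟩ with hx'
      have hxx' : x' ≠ x := by
        apply Fin.ne_of_val_ne; simp [hx']; omega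
      have hx'notin : ∀ i : Fin k, a i ≠ x' := by
        intro i h
        have hv := congrArg (fun z : Fin n => (z : ℕ)) h
        simp only [hx'] at hv
        rcases lt_trichotomy i i₀ with hlt | rfl | hgt
        · have := heqbelow i hlt
          have h2 : (i : ℕ) < (i₀ : ℕ) := hlt
          omega
        · omega
        · have := ha hgt
          rw [← hx] at this
          have h2 : (x : ℕ) < (a i : ℕ) := this
          omega
      set a' : Fin k → Fin n := Function.update a i₀ x' with ha'def
      have ha' : StrictMono a' := by
        intro u v huv
        rcases eq_or_ne u i₀ with rfl | hu
        · rcases eq_or_ne v u with rfl | hv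
          · exact absurd huv (lt_irrefl _)
          · have h1 : a' u = x' := Function.update_self _ _ _
            have h2 : a' v = a v := Function.update_of_ne (by intro h; exact hv h) _ _
            rw [h1, h2]
            have h3 : x < a v := ha huv
            have := h3
            rw [Fin.lt_def] at *
            simp [hx'] at *
            omega
        · rcases eq_or_ne v i₀ with rfl | hv
          · have h1 : a' v = x' := Function.update_self _ _ _
            have h2 : a' u = a u := Function.update_of_ne hu _ _
            rw [h1, h2]
            have h3 := heqbelow u huv
            have h4 : (u : ℕ) < (v : ℕ) := huv
            rw [Fin.lt_def]
            simp [hx']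
            omega
          · have h1 : a' u = a u := Function.update_of_ne hu _ _
            have h2 : a' v = a v := Function.update_of_ne hv _ _
            rw [h1, h2]
            exact ha huv
      have hsum' : (∑ i, ((a' i : ℕ))) = N - 1 ∧ 1 ≤ N := by
        have hup : (fun i => ((a' i : ℕ))) = Function.update (fun i => ((a i : ℕ))) i₀ ((x : ℕ) - 1) := by
          funext j
          rcases eq_or_ne j i₀ with rfl | hj
          · simp [ha'def, hx']
          · simp [ha'def, Function.update_of_ne hj]
        have h1 : (∑ i, ((a' i : ℕ))) = ((x : ℕ) - 1) + ∑ i ∈ Finset.univ \ {i₀}, ((a i : ℕ)) := by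
          rw [show (∑ i, ((a' i : ℕ))) = ∑ i, Function.update (fun i => ((a i : ℕ))) i₀ ((x : ℕ) - 1) i by
            rw [← hup]]
          rw [Finset.sum_update_of_mem (Finset.mem_univ i₀)]
        have h2 : (x : ℕ) + ∑ i ∈ Finset.univ \ {i₀}, ((a i : ℕ)) = N := by
          rw [← hN, Finset.sum_eq_add_sum_sdiff_singleton_of_mem (Finset.mem_univ i₀) (fun i => ((a i : ℕ)))]
        constructor
        · omega
        · omega
      have hcomplrel : compl a ha = fun j => Equiv.swap x' x (compl a' ha' j) := by
        rw [compl_eq_orderEmbOfFin a ha (card_compl_rng' a ha)]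
        refine (Finset.orderEmbOfFin_unique (card_compl_rng' a ha) ?_ ?_).symm
        · intro j
          rw [Finset.mem_compl]
          set y : Fin n := compl a' ha' j with hy
          have hy' : ∀ i, a' i ≠ y := by
            intro i h
            have hmem := compl_mem a' ha' j
            rw [Finset.mem_compl, ← hy] at hmem
            exact hmem (Finset.mem_image.mpr ⟨i, Finset.mem_univ i, h⟩)
          have hyne : y ≠ x' := by
            intro h
            exact hy' i₀ (by rw [ha'def, Function.update_self, h])
          rcases eq_or_ne y x with hyx | hyx
          · rw [hyx, Equiv.swap_apply_right]
            intro hmem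
            obtain ⟨i, _, hi⟩ := Finset.mem_image.mp hmem
            exact hx'notin i hi
          · rw [Equiv.swap_apply_of_ne_of_ne hyne hyx]
            intro hmem
            obtain ⟨i, _, hi⟩ := Finset.mem_image.mp hmem
            rcases eq_or_ne i i₀ with rfl | hii
            · exact hyx (by rw [← hi, hx])
            · exact hy' i (by rw [ha'def, Function.update_of_ne hii, hi])
        · intro u v huv
          dsimp only
          have hmono := compl_strictMono a' ha'
          set yu : Fin n := compl a' ha' u with hyu
          set yv : Fin n := compl a' ha' v with hyv
          have hyuv : yu < yv := hmono huv
          have hx'mem : x' ∈ rng a' :=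
            Finset.mem_image.mpr ⟨i₀, Finset.mem_univ _, Function.update_self _ _ _⟩
          have hne' : ∀ j', compl a' ha' j' ≠ x' := by
            intro j' h
            have hmem := compl_mem a' ha' j'
            rw [Finset.mem_compl, h] at hmem
            exact hmem hx'mem
          rcases eq_or_ne yu x with hyux | hyux
          · rw [hyux, Equiv.swap_apply_right]
            have h1 : x < yv := hyux ▸ hyuv
            rw [Equiv.swap_apply_of_ne_of_ne (hne' v) (ne_of_gt h1)]
            calc x' < x := by rw [Fin.lt_def]; simp [hx']; omega
            _ < yv := h1
          · rcases eq_or_ne yv x with hyvx | hyvx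
            · rw [hyvx, Equiv.swap_apply_right,
                Equiv.swap_apply_of_ne_of_ne (hne' u) hyux]
              have h1 : (yu : ℕ) < (x : ℕ) := by rw [← hyvx]; exact hyuv
              have h2 : (yu : ℕ) ≠ (x : ℕ) - 1 := fun h =>
                (hne' u) (Fin.ext (show ((compl a' ha' u : Fin n) : ℕ) = ((x' : Fin n) : ℕ) by
                  rw [← hyu]; exact h))
              rw [Fin.lt_def]
              simp [hx']
              omega
            · rw [Equiv.swap_apply_of_ne_of_ne (hne' u) hyux,
                Equiv.swap_apply_of_ne_of_ne (hne' v) hyvx]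
              exact hyuv
      have heqv : eqv a ha hkn = (eqv a' ha' hkn).trans (Equiv.swap x' x) := by
        apply Equiv.ext
        rintro (i | j)
        · simp only [Equiv.trans_apply, eqv_inl]
          rcases eq_or_ne i i₀ with rfl | hi
          · rw [show a' i = x' from Function.update_self _ _ _, Equiv.swap_apply_left, hx]
          · rw [show a' i = a i from Function.update_of_ne hi _ _,
              Equiv.swap_apply_of_ne_of_ne (hx'notin i) (fun h => hi (ha.injective (h.trans hx)))]
        · simp only [Equiv.trans_apply, eqv_inr]
          rw [hcomplrel]
      have hperm : permOf a ha hkn = Equiv.swap x' x * permOf a' ha' hkn := by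
        rw [permOf, heqv, ← Equiv.trans_assoc]
        rfl
      have hN1 : N - 1 < N := by omega
      have hIH := IH (N - 1) hN1 a' ha' hsum'.1
      rw [hperm, _root_.map_mul]
      push_cast
      rw [Equiv.Perm.sign_swap hxx', hIH,
        show N + ∑ i : Fin k, (i : ℕ) = ((N - 1) + ∑ i : Fin k, (i : ℕ)) + 1 by omega, pow_succ]
      push_cast
      ring

lemma neg_one_pow_par (p q : ℕ) (h : p % 2 = q % 2) : ((-1 : ℝ)) ^ p = (-1) ^ q := by
  have key : ∀ m : ℕ, ((-1 : ℝ)) ^ m = (-1) ^ (m % 2) := by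
    intro m
    conv_lhs => rw [← Nat.div_add_mod m 2]
    rw [pow_add, pow_mul]
    norm_num
  rw [key p, key q, h]

lemma det_submatrix_eqv (L : Matrix (Fin n) (Fin n) ℝ) (hkn : k ≤ n)
    (r c : Fin k → Fin n) (hr : StrictMono r) (hc : StrictMono c) :
    (L.submatrix ⇑(eqv c hc hkn) ⇑(eqv r hr hkn)).det
      = ((Equiv.Perm.sign (permOf c hc hkn) : ℤ) : ℝ)
        * (((Equiv.Perm.sign (permOf r hr hkn) : ℤ) : ℝ) * L.det) := by
  have hrw : L.submatrix ⇑(eqv c hc hkn) ⇑(eqv r hr hkn)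
      = (((L.submatrix ⇑(sumEquiv hkn) ⇑(sumEquiv hkn)).submatrix
          ⇑((eqv c hc hkn).trans (sumEquiv hkn).symm) id).submatrix id
          ⇑((eqv r hr hkn).trans (sumEquiv hkn).symm)) := by
    ext i j
    simp [Equiv.trans_apply]
  have hc' : ((eqv c hc hkn).trans (sumEquiv hkn).symm)
      = Equiv.permCongr (sumEquiv hkn).symm (permOf c hc hkn) := by
    apply Equiv.ext; intro s
    simp [Equiv.permCongr_apply, permOf, Equiv.trans_apply]
  have hr' : ((eqv r hr hkn).trans (sumEquiv hkn).symm)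
      = Equiv.permCongr (sumEquiv hkn).symm (permOf r hr hkn) := by
    apply Equiv.ext; intro s
    simp [Equiv.permCongr_apply, permOf, Equiv.trans_apply]
  rw [hrw, det_permute', det_permute, det_submatrix_equiv_self, hc', hr',
    Equiv.Perm.sign_permCongr, Equiv.Perm.sign_permCongr]
  push_cast
  ring


lemma jacobi (M : Matrix (Fin n) (Fin n) ℝ) (hM : unitri n M) (hkn : k ≤ n)
    (r c : Fin k → Fin n) (hr : StrictMono r) (hc : StrictMono c) :
    (M⁻¹.submatrix r c).det
      = (-1 : ℝ) ^ ((∑ i, ((r i : ℕ))) + ∑ i, ((c i : ℕ)))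
        * (M.submatrix (compl c hc) (compl r hr)).det := by
  set ε : ℝ := (-1 : ℝ) ^ ((∑ i, ((r i : ℕ))) + ∑ i, ((c i : ℕ))) with hε
  have hsignr := sign_permOf hkn (∑ i, ((r i : ℕ))) r hr rfl
  have hsignc := sign_permOf hkn (∑ i, ((c i : ℕ))) c hc rfl
  have hdetA : (M.submatrix ⇑(eqv c hc hkn) ⇑(eqv r hr hkn)).det = ε := by
    rw [det_submatrix_eqv M hkn r c hr hc, ut_det hM, hsignr, hsignc, hε]
    push_cast
    rw [mul_one, ← pow_add]
    exact neg_one_pow_par _ _ (by omega)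
  have hAinv : (M.submatrix ⇑(eqv c hc hkn) ⇑(eqv r hr hkn))⁻¹
      = M⁻¹.submatrix ⇑(eqv r hr hkn) ⇑(eqv c hc hkn) :=
    inv_submatrix M (ut_isUnitDet hM) _ _
  have hbj := block_jacobi (M.submatrix ⇑(eqv c hc hkn) ⇑(eqv r hr hkn))
    (by rw [hdetA]; exact isUnit_iff_ne_zero.mpr (pow_ne_zero _ (by norm_num)))
  have h11 : ((M.submatrix ⇑(eqv c hc hkn) ⇑(eqv r hr hkn))⁻¹).toBlocks₁₁
      = M⁻¹.submatrix r c := by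
    rw [hAinv]; ext i j; simp [Matrix.toBlocks₁₁]
  have h22 : (M.submatrix ⇑(eqv c hc hkn) ⇑(eqv r hr hkn)).toBlocks₂₂
      = M.submatrix (compl c hc) (compl r hr) := by
    ext i j; simp [Matrix.toBlocks₂₂]
  rw [hdetA, h11, h22] at hbj
  have hsq : ε * ε = 1 := by
    rw [hε, ← pow_add]; exact Even.neg_one_pow ⟨_, rfl⟩
  calc (M⁻¹.submatrix r c).det = ε * ε * (M⁻¹.submatrix r c).det := by rw [hsq, one_mul]
  _ = ε * (ε * (M⁻¹.submatrix r c).det) := by ring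
  _ = ε * (M.submatrix (compl c hc) (compl r hr)).det := by rw [hbj]

lemma jacobi' (M : Matrix (Fin n) (Fin n) ℝ) (hM : unitri n M) (hkn : k ≤ n)
    (r c : Fin k → Fin n) (hr : StrictMono r) (hc : StrictMono c) :
    (M⁻¹.submatrix (compl c hc) (compl r hr)).det
      = (-1 : ℝ) ^ ((∑ j, ((compl c hc j : ℕ))) + ∑ j, ((compl r hr j : ℕ)))
        * (M.submatrix r c).det := by
  have h := jacobi M hM (show n - k ≤ n by omega) (compl c hc) (compl r hr)
      (compl_strictMono c hc) (compl_strictMono r hr)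
  rw [h]
  congr 1
  rw [compl_compl' r hr hkn, compl_compl' c hc hkn]
  have hrw : M.submatrix (fun j => r (Fin.cast (by omega) j)) (fun j => c (Fin.cast (by omega) j))
      = (M.submatrix r c).submatrix ⇑(finCongr (show n - (n - k) = k by omega))
          ⇑(finCongr (show n - (n - k) = k by omega)) := rfl
  rw [hrw, det_submatrix_equiv_self]

lemma det_PLP_submatrix (L : Matrix (Fin n) (Fin n) ℝ) {k : ℕ} (a b : Fin k → Fin n) :
    ((Pdiag n * L * Pdiag n).submatrix a b).det
      = (-1 : ℝ) ^ ((∑ i, ((a i : ℕ))) + ∑ i, ((b i : ℕ))) * (L.submatrix a b).det := by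
  have hentry : (Pdiag n * L * Pdiag n).submatrix a b
      = Matrix.diagonal (fun i => ((-1 : ℝ)) ^ ((a i : ℕ))) * (L.submatrix a b)
        * Matrix.diagonal (fun j => ((-1 : ℝ)) ^ ((b j : ℕ))) := by
    ext i j
    simp only [Pdiag, Matrix.submatrix_apply, Matrix.mul_diagonal, Matrix.diagonal_mul]
  rw [hentry, det_mul, det_mul, det_diagonal, det_diagonal,
    Finset.prod_pow_eq_pow_sum, Finset.prod_pow_eq_pow_sum, pow_add]
  ring

lemma unitri_PLP {L : Matrix (Fin n) (Fin n) ℝ} (hL : unitri n L) :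
    unitri n (Pdiag n * L * Pdiag n) := by
  have hentry : ∀ i j : Fin n, (Pdiag n * L * Pdiag n) i j
      = (-1 : ℝ) ^ ((i : ℕ)) * L i j * (-1) ^ ((j : ℕ)) := by
    intro i j
    simp only [Pdiag, Matrix.mul_diagonal, Matrix.diagonal_mul]
  constructor
  · intro i
    rw [hentry, hL.1 i, mul_one, ← pow_add]
    exact Even.neg_one_pow ⟨_, rfl⟩
  · intro i j hij
    rw [hentry, hL.2 i j hij]
    ring


end TNaux

/-- `L ∈ Lo_n^1` is totally negative if and only if `L⁻¹` is totally
positive. -/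
theorem totNeg_iff_inv_totPos (L : Matrix (Fin n) (Fin n) ℝ) (hL : unitri n L) :
    totNeg n L ↔ totPos n L⁻¹ := by
  constructor
  · rintro ⟨hu, hpos⟩
    refine ⟨TNaux.ut_inv hL, ?_⟩
    intro k r c hr hc hex
    obtain ⟨M, hM, hMdet⟩ := hex
    have hkn : k ≤ n := by
      have := Fintype.card_le_of_injective r hr.injective
      simpa using this
    rw [TNaux.jacobi L hL hkn r c hr hc]
    have hwit : ((M⁻¹.submatrix (TNaux.compl c hc) (TNaux.compl r hr)).det) ≠ 0 := by
      rw [TNaux.jacobi' M hM hkn r c hr hc]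
      exact mul_ne_zero (pow_ne_zero _ (by norm_num)) hMdet
    have hp := hpos (n - k) (TNaux.compl c hc) (TNaux.compl r hr)
      (TNaux.compl_strictMono c hc) (TNaux.compl_strictMono r hr)
      ⟨M⁻¹, TNaux.ut_inv hM, hwit⟩
    rw [TNaux.det_PLP_submatrix L (TNaux.compl c hc) (TNaux.compl r hr)] at hp
    have hpar : ((-1 : ℝ)) ^ ((∑ i, ((r i : ℕ))) + ∑ i, ((c i : ℕ)))
        = (-1) ^ ((∑ j, ((TNaux.compl c hc j : ℕ))) + ∑ j, ((TNaux.compl r hr j : ℕ))) := by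
      have h1 := TNaux.sum_add_sum_compl r hr
      have h2 := TNaux.sum_add_sum_compl c hc
      exact TNaux.neg_one_pow_par _ _ (by omega)
    rw [hpar]
    exact hp
  · rintro ⟨hu, hpos⟩
    refine ⟨TNaux.unitri_PLP hL, ?_⟩
    intro k r c hr hc hex
    obtain ⟨M, hM, hMdet⟩ := hex
    have hkn : k ≤ n := by
      have := Fintype.card_le_of_injective r hr.injective
      simpa using this
    rw [TNaux.det_PLP_submatrix L r c]
    have hwit : ((M⁻¹.submatrix (TNaux.compl c hc) (TNaux.compl r hr)).det) ≠ 0 := by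
      rw [TNaux.jacobi' M hM hkn r c hr hc]
      exact mul_ne_zero (pow_ne_zero _ (by norm_num)) hMdet
    have hp := hpos (n - k) (TNaux.compl c hc) (TNaux.compl r hr)
      (TNaux.compl_strictMono c hc) (TNaux.compl_strictMono r hr)
      ⟨M⁻¹, TNaux.ut_inv hM, hwit⟩
    rw [TNaux.jacobi' L hL hkn r c hr hc] at hp
    have hpar : ((-1 : ℝ)) ^ ((∑ i, ((r i : ℕ))) + ∑ i, ((c i : ℕ)))
        = (-1) ^ ((∑ j, ((TNaux.compl c hc j : ℕ))) + ∑ j, ((TNaux.compl r hr j : ℕ))) := by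
      have h1 := TNaux.sum_add_sum_compl r hr
      have h2 := TNaux.sum_add_sum_compl c hc
      exact TNaux.neg_one_pow_par _ _ (by omega)
    rw [hpar]
    exact hp
end

section
/- For any G ∈ Lo_n^1 there exists t_+ > 0 such that G·exp(tN) is totally positive for all t > t_+, and there exists t_- < 0 such that G·exp(tN) is totally negative for all t < t_-. -/
open Matrix

variable (n : ℕ)

/-- The lower shift matrix `N`. -/
def lowerShift : Matrix (Fin n) (Fin n) ℝ :=
  Matrix.of fun i j => if (i : ℕ) = (j : ℕ) + 1 then 1 else 0


open Matrix

namespace TPAux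

noncomputable def g (m : ℤ) : ℝ := if 0 ≤ m then ((m.toNat).factorial : ℝ)⁻¹ else 0

lemma g_neg {m : ℤ} (h : m < 0) : g m = 0 := if_neg (not_le.2 h)

lemma g_zero : g 0 = 1 := by simp [g]

lemma g_pos {m : ℤ} (h : 0 ≤ m) : 0 < g m := by
  rw [g, if_pos h]
  positivity

lemma g_nonneg (m : ℤ) : 0 ≤ g m := by
  by_cases h : 0 ≤ m
  · exact (g_pos h).le
  · simp [g, h]

lemma g_sub_one (m : ℤ) : g (m - 1) = (m : ℝ) * g m := by
  rcases lt_trichotomy m 0 with h | h | h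
  · rw [g_neg h, g_neg (by omega), mul_zero]
  · subst h; rw [g_neg (by omega), Int.cast_zero, zero_mul]
  · rw [g, g, if_pos (by omega), if_pos h.le]
    have hm : m.toNat = (m - 1).toNat + 1 := by omega
    have hc : (m : ℝ) = ((m - 1).toNat : ℝ) + 1 := by
      have : ((m.toNat : ℤ) : ℝ) = (m : ℝ) := by rw [Int.toNat_of_nonneg h.le]
      rw [← this]; push_cast [hm]; ring
    rw [hm, Nat.factorial_succ, hc]
    have h1 : (((m - 1).toNat.factorial : ℝ)) ≠ 0 := Nat.cast_ne_zero.2 (Nat.factorial_ne_zero _)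
    have h2 : (((m - 1).toNat : ℝ) + 1) ≠ 0 := by positivity
    push_cast
    field_simp

noncomputable def Amat {k : ℕ} (r c : Fin k → ℤ) : Matrix (Fin k) (Fin k) ℝ :=
  Matrix.of fun i j => g (r i - c j)

/-- pigeonhole: for any permutation σ of `Fin k` and any `i`, some `j ≤ i` has `i ≤ σ j`. -/
lemma perm_pigeonhole {k : ℕ} (σ : Equiv.Perm (Fin k)) (i : Fin k) :
    ∃ j, j ≤ i ∧ i ≤ σ j := by
  by_contra h
  push_neg at h
  have hmap : ∀ j ∈ Finset.Iic i, σ j ∈ Finset.Iio i := by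
    intro j hj
    exact Finset.mem_Iio.2 (h j (Finset.mem_Iic.1 hj))
  have hcard := Finset.card_le_card_of_injOn σ hmap (σ.injective.injOn)
  rw [Fin.card_Iic, Fin.card_Iio] at hcard
  omega

/-- If some `r i < c i` with `r, c` monotone, then any matrix vanishing on entries with
`r a < c b` has zero determinant. -/
lemma det_eq_zero_of_lt {k : ℕ} (r c : Fin k → ℤ) (hr : Monotone r) (hc : Monotone c)
    (B : Matrix (Fin k) (Fin k) ℝ) (hB : ∀ a b, r a < c b → B a b = 0)
    (i : Fin k) (hi : r i < c i) : B.det = 0 := by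
  rw [Matrix.det_apply]
  apply Finset.sum_eq_zero
  intro σ _
  obtain ⟨j, hji, hij⟩ := perm_pigeonhole σ⁻¹ i
  have hzero : B (σ (σ⁻¹ j)) (σ⁻¹ j) = 0 := by
    apply hB
    rw [show σ (σ⁻¹ j) = j from σ.apply_symm_apply j]
    exact lt_of_le_of_lt (hr hji) (lt_of_lt_of_le hi (hc hij))
  have hp : (∏ x : Fin k, B (σ x) x) = 0 :=
    Finset.prod_eq_zero (Finset.mem_univ (σ⁻¹ j)) hzero
  rw [hp, smul_zero]

end TPAux

section
open TPAux Matrix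

example : True := trivial

namespace TPAux

lemma key_identity {k : ℕ} (r c : Fin k → ℤ) :
    ∑ i : Fin k, (Amat (Function.update r i (r i - 1)) c).det
      = ((∑ i : Fin k, (r i - c i) : ℤ) : ℝ) * (Amat r c).det := by
  simp_rw [Matrix.det_apply']
  rw [Finset.sum_comm, Finset.mul_sum]
  apply Finset.sum_congr rfl
  intro σ _
  -- per permutation identity
  have hprod : ∀ i : Fin k,
      (∏ j : Fin k, (Amat (Function.update r i (r i - 1)) c) (σ j) j)
        = ((r i - c (σ⁻¹ i) : ℤ) : ℝ) * ∏ j : Fin k, (Amat r c) (σ j) j := by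
    intro i
    have hji : σ (σ⁻¹ i) = i := σ.apply_symm_apply i
    have hsplit : ∀ (f : Fin k → ℝ), (∏ j : Fin k, f j) = f (σ⁻¹ i) * ∏ j ∈ Finset.univ.erase (σ⁻¹ i), f j := by
      intro f
      rw [Finset.mul_prod_erase Finset.univ f (Finset.mem_univ (σ⁻¹ i))]
    rw [hsplit, hsplit (fun j => (Amat r c) (σ j) j)]
    have h1 : (Amat (Function.update r i (r i - 1)) c) (σ (σ⁻¹ i)) (σ⁻¹ i)
        = ((r i - c (σ⁻¹ i) : ℤ) : ℝ) * (Amat r c) (σ (σ⁻¹ i)) (σ⁻¹ i) := by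
      rw [hji]
      show g (Function.update r i (r i - 1) i - c (σ⁻¹ i)) = _
      rw [Function.update_self]
      have : r i - 1 - c (σ⁻¹ i) = (r i - c (σ⁻¹ i)) - 1 := by ring
      rw [this, g_sub_one]
      push_cast
      rfl
    have h2 : ∀ j ∈ Finset.univ.erase (σ⁻¹ i),
        (Amat (Function.update r i (r i - 1)) c) (σ j) j = (Amat r c) (σ j) j := by
      intro j hj
      have hne : σ j ≠ i := by
        intro hcon
        exact (Finset.mem_erase.1 hj).1 (by rw [← hcon, show σ⁻¹ (σ j) = j from σ.symm_apply_apply j])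
      show g (Function.update r i (r i - 1) (σ j) - c j) = g (r (σ j) - c j)
      rw [Function.update_of_ne hne]
    rw [h1, Finset.prod_congr rfl h2, mul_assoc]
  simp_rw [hprod]
  rw [← Finset.mul_sum, ← Finset.sum_mul]
  have hsum : (∑ x : Fin k, ((r x - c (σ⁻¹ x) : ℤ) : ℝ)) = ((∑ i : Fin k, (r i - c i) : ℤ) : ℝ) := by
    push_cast
    rw [Finset.sum_sub_distrib, Finset.sum_sub_distrib]
    congr 1
    exact Equiv.sum_comp σ⁻¹ (fun i => ((c i : ℤ) : ℝ))
  rw [hsum]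
  ring

end TPAux
end

namespace TPAux
open Matrix

lemma sum_update_sub {k : ℕ} (r c : Fin k → ℤ) (i : Fin k) :
    (∑ j : Fin k, (Function.update r i (r i - 1) j - c j))
      = (∑ j : Fin k, (r j - c j)) - 1 := by
  have h : ∀ j : Fin k, Function.update r i (r i - 1) j - c j
      = (r j - c j) - (if j = i then 1 else 0) := by
    intro j
    by_cases hj : j = i
    · subst hj; rw [Function.update_self, if_pos rfl]; ring
    · rw [Function.update_of_ne hj]; simp [hj]
  simp_rw [h]
  rw [Finset.sum_sub_distrib, Finset.sum_ite_eq' Finset.univ i (fun _ => (1:ℤ))]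
  simp

lemma amat_det_pos {k : ℕ} (d : ℕ) :
    ∀ (r c : Fin k → ℤ), StrictMono r → StrictMono c → (∀ i, c i ≤ r i) →
      (∑ i : Fin k, (r i - c i)) = d → 0 < (Amat r c).det := by
  induction d using Nat.strong_induction_on with
  | _ d IH =>
    intro r c hr hc hcr hsum
    rcases Nat.eq_zero_or_pos d with hd | hd
    · -- base case: r = c, triangular determinant
      subst hd
      have hrc : ∀ i, r i = c i := by
        have h0 : ∀ i ∈ Finset.univ, r i - c i = 0 := by
          rw [← Finset.sum_eq_zero_iff_of_nonneg (fun i _ => sub_nonneg.2 (hcr i))]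
          exact_mod_cast hsum
        intro i
        have := h0 i (Finset.mem_univ i)
        omega
      have htri : (Amat r c).BlockTriangular OrderDual.toDual := by
        intro a b hab
        have hab' : a < b := hab
        show g (r a - c b) = 0
        exact g_neg (by have := hc hab'; have := hrc a; omega)
      rw [Matrix.det_of_lowerTriangular _ htri]
      apply Finset.prod_pos
      intro i _
      show 0 < g (r i - c i)
      rw [hrc i, sub_self, g_zero]
      norm_num
    · -- inductive step
      -- terms of the key identity are nonnegative
      have hterm : ∀ i : Fin k, 0 ≤ (Amat (Function.update r i (r i - 1)) c).det := by
        intro i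
        set u := Function.update r i (r i - 1) with hu
        have humono : Monotone u := by
          intro a b hab
          rcases eq_or_lt_of_le hab with h | h
          · subst h; exact le_refl _
          · have h1 : u a ≤ r a := by
              by_cases ha : a = i
              · subst ha; rw [hu, Function.update_self]; omega
              · rw [hu, Function.update_of_ne ha]
            have h2 : r b - 1 ≤ u b := by
              by_cases hb : b = i
              · subst hb; rw [hu, Function.update_self]
              · rw [hu, Function.update_of_ne hb]; omega
            have := hr h
            omega
        by_cases hlow : ∃ j, u j < c j
        · obtain ⟨j, hj⟩ := hlow
          rw [det_eq_zero_of_lt u c humono hc.monotone (Amat u c)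
            (fun a b hab => g_neg (m := u a - c b) (by omega)) j hj]
        · push_neg at hlow
          by_cases hsm : StrictMono u
          · -- apply induction hypothesis
            have hsum' : (∑ j : Fin k, (u j - c j)) = ((d - 1 : ℕ) : ℤ) := by
              rw [hu, sum_update_sub, hsum]
              omega
            exact (IH (d-1) (by omega) u c hsm hc hlow hsum').le
          · -- two equal rows
            obtain ⟨a, b, hab, hnab⟩ : ∃ a b, a < b ∧ ¬ u a < u b := by
              by_contra hcon
              push_neg at hcon
              exact hsm (fun a b hab => hcon a b hab)
            have heq : u a = u b := le_antisymm (humono hab.le) (not_lt.1 hnab)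
            have hrows : (Amat u c) a = (Amat u c) b := by
              funext j
              show g (u a - c j) = g (u b - c j)
              rw [heq]
            rw [Matrix.det_zero_of_row_eq hab.ne hrows]
      -- there is a positive term
      have hex : ∃ i : Fin k, c i < r i := by
        by_contra hcon
        push_neg at hcon
        have : (∑ i : Fin k, (r i - c i)) ≤ 0 :=
          Finset.sum_nonpos (fun i _ => by have := hcon i; omega)
        omega
      set S : Finset (Fin k) := Finset.univ.filter (fun i => c i < r i) with hS
      have hSne : S.Nonempty := by
        obtain ⟨i, hi⟩ := hex
        exact ⟨i, by simp [hS, hi]⟩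
      set i₀ := S.min' hSne with hi₀def
      have hi₀mem : i₀ ∈ S := S.min'_mem hSne
      have hi₀lt : c i₀ < r i₀ := by
        have := hi₀mem
        rw [hS, Finset.mem_filter] at this
        exact this.2
      have hmin : ∀ j, j < i₀ → r j = c j := by
        intro j hj
        by_contra hne
        have hjS : j ∈ S := by
          rw [hS, Finset.mem_filter]
          exact ⟨Finset.mem_univ j, lt_of_le_of_ne (hcr j) (fun h => hne h.symm)⟩
        exact absurd (S.min'_le j hjS) (not_le.2 hj)
      set u := Function.update r i₀ (r i₀ - 1) with hu
      have hsm : StrictMono u := by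
        intro a b hab
        by_cases hbi : b = i₀
        · subst hbi
          have ha : a ≠ i₀ := hab.ne
          rw [hu, Function.update_of_ne ha, Function.update_self]
          have hra : r a = c a := hmin a hab
          have : c a < c i₀ := hc hab
          omega
        · by_cases hai : a = i₀
          · subst hai
            rw [hu, Function.update_self, Function.update_of_ne hbi]
            have := hr hab
            omega
          · rw [hu, Function.update_of_ne hai, Function.update_of_ne hbi]
            exact hr hab
      have hulow : ∀ j, c j ≤ u j := by
        intro j
        by_cases hj : j = i₀
        · subst hj; rw [hu, Function.update_self]; omega
        · rw [hu, Function.update_of_ne hj]; exact hcr j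
      have husum : (∑ j : Fin k, (u j - c j)) = ((d - 1 : ℕ) : ℤ) := by
        rw [hu, sum_update_sub, hsum]
        omega
      have hpos : 0 < (Amat u c).det := IH (d-1) (by omega) u c hsm hc hulow husum
      have hsumpos : 0 < ∑ i : Fin k, (Amat (Function.update r i (r i - 1)) c).det :=
        Finset.sum_pos' (fun i _ => hterm i) ⟨i₀, Finset.mem_univ i₀, hpos⟩
      rw [key_identity, hsum] at hsumpos
      have hdpos : (0:ℝ) < ((d:ℤ):ℝ) := by exact_mod_cast hd
      nlinarith [hsumpos, hdpos]

end TPAux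

open Matrix TPAux

/-- Explicit form of `exp (t • N)`. -/
noncomputable def expE (n : ℕ) (t : ℝ) : Matrix (Fin n) (Fin n) ℝ :=
  Matrix.of fun a b => g ((a : ℤ) - (b : ℤ)) * t ^ ((a : ℕ) - (b : ℕ))

lemma lowerShift_pow (n m : ℕ) (a b : Fin n) :
    ((lowerShift n) ^ m) a b = if (a : ℕ) = (b : ℕ) + m then 1 else 0 := by
  induction m generalizing b with
  | zero =>
    simp only [pow_zero, Matrix.one_apply, Nat.add_zero]
    congr 1
    simp [Fin.ext_iff, eq_comm]
  | succ m ih =>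
    rw [pow_succ, Matrix.mul_apply]
    by_cases hb : (b : ℕ) + 1 < n
    · set b' : Fin n := ⟨(b : ℕ) + 1, hb⟩ with hb'
      rw [Finset.sum_eq_single b']
      · have h1 : (lowerShift n) b' b = 1 := by
          show (if ((b' : ℕ) = (b : ℕ) + 1) then (1:ℝ) else 0) = 1
          rw [if_pos rfl]
        rw [h1, mul_one, ih]
        have hbm : (b' : ℕ) + m = (b : ℕ) + (m + 1) := by simp only [hb']; omega
        rw [hbm]
      · intro x _ hx
        have h0 : (lowerShift n) x b = 0 := by
          show (if ((x : ℕ) = (b : ℕ) + 1) then (1:ℝ) else 0) = 0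
          rw [if_neg]
          intro hcon
          exact hx (Fin.ext hcon)
        rw [h0, mul_zero]
      · intro hcon
        exact absurd (Finset.mem_univ b') hcon
    · rw [if_neg, Finset.sum_eq_zero]
      · intro x _
        have h0 : (lowerShift n) x b = 0 := by
          show (if ((x : ℕ) = (b : ℕ) + 1) then (1:ℝ) else 0) = 0
          rw [if_neg]
          intro hcon
          omega
        rw [h0, mul_zero]
      · intro hcon
        have := a.isLt
        omega

lemma exp_lowerShift (n : ℕ) (t : ℝ) :
    NormedSpace.exp (t • lowerShift n) = expE n t := by
  have hexp := congrFun (NormedSpace.exp_eq_tsum (𝕂 := ℝ) (𝔸 := Matrix (Fin n) (Fin n) ℝ))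
    (t • lowerShift n)
  rw [hexp]
  have hsupp : ∀ m ∉ Finset.range n, ((m.factorial : ℝ)⁻¹ : ℝ) • (t • lowerShift n) ^ m = 0 := by
    intro m hm
    have hz : (lowerShift n) ^ m = 0 := by
      ext a b
      rw [lowerShift_pow]
      rw [Finset.mem_range, not_lt] at hm
      have := a.isLt
      rw [if_neg (by omega)]
      rfl
    rw [smul_pow, hz, smul_zero, smul_zero]
  rw [tsum_eq_sum hsupp]
  ext a b
  rw [Matrix.sum_apply]
  have hterm : ∀ m ∈ Finset.range n,
      (((m.factorial : ℝ)⁻¹ : ℝ) • (t • lowerShift n) ^ m) a b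
        = (m.factorial : ℝ)⁻¹ * t ^ m * (if (a : ℕ) = (b : ℕ) + m then 1 else 0) := by
    intro m _
    rw [smul_pow, Matrix.smul_apply, Matrix.smul_apply, lowerShift_pow]
    simp [mul_assoc]
  rw [Finset.sum_congr rfl hterm]
  show _ = g ((a : ℤ) - (b : ℤ)) * t ^ ((a : ℕ) - (b : ℕ))
  by_cases hab : (b : ℕ) ≤ (a : ℕ)
  · rw [Finset.sum_eq_single ((a : ℕ) - (b : ℕ))]
    · rw [if_pos (by omega)]
      have hg : g ((a : ℤ) - (b : ℤ)) = (((a : ℕ) - (b : ℕ)).factorial : ℝ)⁻¹ := by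
        have hnat : ((a:ℤ) - (b:ℤ)).toNat = (a:ℕ) - (b:ℕ) := by omega
        rw [g, if_pos (by omega), hnat]
      rw [hg]
      ring
    · intro m _ hm
      rw [if_neg (by omega), mul_zero]
    · intro hcon
      have := a.isLt
      exact absurd (Finset.mem_range.2 (by omega)) hcon
  · rw [Finset.sum_eq_zero, g_neg (by omega), zero_mul]
    intro m _
    rw [if_neg (by omega), mul_zero]

lemma unitri_mul_expE (n : ℕ) (G : Matrix (Fin n) (Fin n) ℝ) (hG : unitri n G) (t : ℝ) :
    unitri n (G * expE n t) := by
  constructor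
  · intro a
    rw [Matrix.mul_apply]
    rw [Finset.sum_eq_single a]
    · show G a a * (g ((a:ℤ) - (a:ℤ)) * t ^ ((a:ℕ) - (a:ℕ))) = 1
      rw [hG.1 a, sub_self, g_zero, Nat.sub_self, pow_zero]
      ring
    · intro m _ hm
      rcases lt_or_gt_of_ne (fun h => hm (Fin.ext h) : (m:ℕ) ≠ (a:ℕ)) with h | h
      · show G a m * (g ((m:ℤ) - (a:ℤ)) * t ^ ((m:ℕ) - (a:ℕ))) = 0
        rw [g_neg (by omega)]
        ring
      · rw [hG.2 a m (by omega)]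
        ring
    · intro hcon
      exact absurd (Finset.mem_univ a) hcon
  · intro a b hab
    rw [Matrix.mul_apply]
    apply Finset.sum_eq_zero
    intro m _
    by_cases hm : (a : ℕ) < (m : ℕ)
    · rw [hG.2 a m hm]; ring
    · show G a m * (g ((m:ℤ) - (b:ℤ)) * t ^ ((m:ℕ) - (b:ℕ))) = 0
      rw [g_neg (by omega)]
      ring

open Polynomial in
/-- Entry polynomial of `G * expE n t` as a polynomial in `t`. -/
noncomputable def Ep (n : ℕ) (G : Matrix (Fin n) (Fin n) ℝ) (a b : Fin n) : Polynomial ℝ :=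
  ∑ m : Fin n, Polynomial.C (G a m * g ((m : ℤ) - (b : ℤ))) * Polynomial.X ^ ((m : ℕ) - (b : ℕ))

lemma Ep_eval (n : ℕ) (G : Matrix (Fin n) (Fin n) ℝ) (a b : Fin n) (t : ℝ) :
    (Ep n G a b).eval t = (G * expE n t) a b := by
  rw [Ep, Matrix.mul_apply, Polynomial.eval_finset_sum]
  apply Finset.sum_congr rfl
  intro m _
  show _ = G a m * (g ((m : ℤ) - (b : ℤ)) * t ^ ((m : ℕ) - (b : ℕ)))
  simp [mul_assoc]

lemma Ep_zero (n : ℕ) (G : Matrix (Fin n) (Fin n) ℝ) (hG : unitri n G) (a b : Fin n)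
    (h : (a : ℕ) < (b : ℕ)) : Ep n G a b = 0 := by
  rw [Ep]
  apply Finset.sum_eq_zero
  intro m _
  by_cases hm : (a : ℕ) < (m : ℕ)
  · rw [hG.2 a m hm, zero_mul, Polynomial.C_0, zero_mul]
  · rw [g_neg (by omega), mul_zero, Polynomial.C_0, zero_mul]

lemma Ep_natDegree_le (n : ℕ) (G : Matrix (Fin n) (Fin n) ℝ) (hG : unitri n G) (a b : Fin n) :
    (Ep n G a b).natDegree ≤ (a : ℕ) - (b : ℕ) := by
  rw [Ep]
  apply Polynomial.natDegree_sum_le_of_forall_le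
  intro m _
  by_cases hm : (a : ℕ) < (m : ℕ)
  · rw [hG.2 a m hm, zero_mul, Polynomial.C_0, zero_mul]
    simp
  · refine (Polynomial.natDegree_C_mul_le _ _).trans ?_
    rw [Polynomial.natDegree_X_pow]
    omega

lemma Ep_coeff (n : ℕ) (G : Matrix (Fin n) (Fin n) ℝ) (hG : unitri n G) (a b : Fin n)
    (h : (b : ℕ) ≤ (a : ℕ)) :
    (Ep n G a b).coeff ((a : ℕ) - (b : ℕ)) = g ((a : ℤ) - (b : ℤ)) := by
  rw [Ep, Polynomial.finset_sum_coeff]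
  rw [Finset.sum_eq_single a]
  · rw [Polynomial.coeff_C_mul, Polynomial.coeff_X_pow, if_pos rfl, hG.1 a, one_mul, mul_one]
  · intro m _ hm
    rw [Polynomial.coeff_C_mul, Polynomial.coeff_X_pow]
    by_cases hma : (a : ℕ) < (m : ℕ)
    · rw [hG.2 a m hma, zero_mul, zero_mul]
    · by_cases hmb : (b : ℕ) ≤ (m : ℕ)
      · rw [if_neg, mul_zero]
        have : (m : ℕ) ≠ (a : ℕ) := fun hc => hm (Fin.ext hc)
        omega
      · rw [g_neg (by omega), mul_zero, zero_mul]
  · intro hcon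
    exact absurd (Finset.mem_univ a) hcon

/-- Coefficient of a product at the sum of degree bounds. -/
lemma coeff_prod_of_natDegree_le' {ι : Type*} (s : Finset ι) (f : ι → Polynomial ℝ) (d : ι → ℕ)
    (h : ∀ i ∈ s, (f i).natDegree ≤ d i) :
    (∏ i ∈ s, f i).coeff (∑ i ∈ s, d i) = ∏ i ∈ s, (f i).coeff (d i) := by
  induction s using Finset.cons_induction with
  | empty => simp
  | cons a s ha IH =>
    rw [Finset.prod_cons, Finset.sum_cons, Finset.prod_cons]
    rw [Polynomial.coeff_mul_add_eq_of_natDegree_le (h a (Finset.mem_cons_self a s))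
      ((Polynomial.natDegree_prod_le s f).trans (Finset.sum_le_sum
        (fun i hi => h i (Finset.mem_cons_of_mem hi))))]
    rw [IH (fun i hi => h i (Finset.mem_cons_of_mem hi))]

/-- A real polynomial with a positive coefficient bounding its degree is eventually positive. -/
lemma eventually_pos_of_coeff (p : Polynomial ℝ) (D : ℕ) (hdeg : p.natDegree ≤ D)
    (hc : 0 < p.coeff D) : ∀ᶠ t in Filter.atTop, 0 < p.eval t := by
  have hp0 : p ≠ 0 := fun h => by simp [h] at hc
  have hD : p.natDegree = D :=
    le_antisymm hdeg (Polynomial.le_natDegree_of_ne_zero hc.ne')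
  have hlead : 0 < p.leadingCoeff := by rwa [Polynomial.leadingCoeff, hD]
  rcases Nat.eq_zero_or_pos D with h0 | h0
  · have : p = Polynomial.C (p.coeff 0) := Polynomial.eq_C_of_natDegree_eq_zero (h0 ▸ hD)
    refine Filter.Eventually.of_forall (fun t => ?_)
    rw [this, Polynomial.eval_C]
    rw [h0] at hc
    exact hc
  · have hdegpos : 0 < p.degree := by
      rw [Polynomial.degree_eq_natDegree hp0, hD]
      exact_mod_cast h0
    have := Polynomial.tendsto_atTop_of_leadingCoeff_nonneg p hdegpos hlead.le
    exact this.eventually_gt_atTop 0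

section MinorPoly

variable {n : ℕ} {G : Matrix (Fin n) (Fin n) ℝ}

lemma sum_deg_perm {k : ℕ} (r c : Fin k → Fin n) (hcr : ∀ i, (c i : ℕ) ≤ (r i : ℕ))
    (σ : Equiv.Perm (Fin k)) (hσ : ∀ i, (c i : ℕ) ≤ (r (σ i) : ℕ)) :
    (∑ i : Fin k, ((r (σ i) : ℕ) - (c i : ℕ))) = ∑ i : Fin k, ((r i : ℕ) - (c i : ℕ)) := by
  have h1 : ((∑ i : Fin k, ((r (σ i) : ℕ) - (c i : ℕ)) : ℕ) : ℤ)
      = ((∑ i : Fin k, ((r i : ℕ) - (c i : ℕ)) : ℕ) : ℤ) := by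
    push_cast [Nat.cast_sub, hσ, hcr]
    rw [Finset.sum_sub_distrib, Finset.sum_sub_distrib]
    congr 1
    exact Equiv.sum_comp σ (fun i => ((r i : ℕ) : ℤ))
  exact_mod_cast h1

lemma minor_eventually_pos (hG : unitri n G) {k : ℕ} (r c : Fin k → Fin n)
    (hr : StrictMono r) (hc : StrictMono c) (hcr : ∀ i, (c i : ℕ) ≤ (r i : ℕ)) :
    ∀ᶠ t in Filter.atTop, 0 < ((G * expE n t).submatrix r c).det := by
  classical
  set Mp : Matrix (Fin k) (Fin k) (Polynomial ℝ) :=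
    Matrix.of fun i j => Ep n G (r i) (c j) with hMp
  set D : ℕ := ∑ i : Fin k, ((r i : ℕ) - (c i : ℕ)) with hD
  set r' : Fin k → ℤ := fun i => ((r i : ℕ) : ℤ) with hr'
  set c' : Fin k → ℤ := fun i => ((c i : ℕ) : ℤ) with hc'
  -- determinant degree bound
  have hdeg : Mp.det.natDegree ≤ D := by
    rw [Matrix.det_apply']
    apply Polynomial.natDegree_sum_le_of_forall_le
    intro σ _
    refine Polynomial.natDegree_mul_le.trans ?_
    rw [Polynomial.natDegree_intCast, zero_add]
    by_cases hσ : ∀ i, (c i : ℕ) ≤ (r (σ i) : ℕ)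
    · refine (Polynomial.natDegree_prod_le _ _).trans ?_
      rw [hD, ← sum_deg_perm r c hcr σ hσ]
      apply Finset.sum_le_sum
      intro i _
      exact Ep_natDegree_le n G hG (r (σ i)) (c i)
    · push_neg at hσ
      obtain ⟨i, hi⟩ := hσ
      have : (∏ j : Fin k, Mp (σ j) j) = 0 :=
        Finset.prod_eq_zero (Finset.mem_univ i) (Ep_zero n G hG _ _ hi)
      rw [this]
      simp
  -- determinant leading coefficient
  have hcoeff : Mp.det.coeff D = (TPAux.Amat r' c').det := by
    rw [Matrix.det_apply', Matrix.det_apply', Polynomial.finset_sum_coeff]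
    apply Finset.sum_congr rfl
    intro σ _
    rw [Polynomial.coeff_intCast_mul]
    congr 1
    simp only [hMp, Matrix.of_apply]
    by_cases hσ : ∀ i, (c i : ℕ) ≤ (r (σ i) : ℕ)
    · have hDeq : D = ∑ i : Fin k, ((r (σ i) : ℕ) - (c i : ℕ)) := by
        rw [hD, sum_deg_perm r c hcr σ hσ]
      rw [hDeq, coeff_prod_of_natDegree_le' Finset.univ _ _
        (fun i _ => Ep_natDegree_le n G hG (r (σ i)) (c i))]
      apply Finset.prod_congr rfl
      intro i _
      show (Ep n G (r (σ i)) (c i)).coeff _ = TPAux.g (r' (σ i) - c' i)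
      rw [Ep_coeff n G hG _ _ (hσ i)]
    · push_neg at hσ
      obtain ⟨i, hi⟩ := hσ
      have h1 : (∏ j : Fin k, Ep n G (r (σ j)) (c j)) = 0 :=
        Finset.prod_eq_zero (Finset.mem_univ i) (Ep_zero n G hG _ _ hi)
      have h2 : (∏ j : Fin k, TPAux.Amat r' c' (σ j) j) = 0 := by
        refine Finset.prod_eq_zero (Finset.mem_univ i) ?_
        exact TPAux.g_neg (m := r' (σ i) - c' i) (by simp only [hr', hc']; omega)
      rw [h1, h2]
      simp
  -- positivity of the leading coefficient
  have hpos : 0 < (TPAux.Amat r' c').det := by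
    refine TPAux.amat_det_pos D r' c' ?_ ?_ ?_ ?_
    · intro a b hab
      simp only [hr']
      exact_mod_cast Fin.lt_iff_val_lt_val.1 (hr hab)
    · intro a b hab
      simp only [hc']
      exact_mod_cast Fin.lt_iff_val_lt_val.1 (hc hab)
    · intro i
      simp only [hr', hc']
      exact_mod_cast hcr i
    · rw [hD]
      push_cast [Nat.cast_sub, hcr]
      rfl
  -- evaluation of the polynomial determinant
  have heval : ∀ t : ℝ, Mp.det.eval t = ((G * expE n t).submatrix r c).det := by
    intro t
    have hmap : Mp.map (Polynomial.eval t) = (G * expE n t).submatrix r c := by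
      ext i j
      rw [Matrix.map_apply, Matrix.submatrix_apply]
      exact Ep_eval n G (r i) (c j) t
    rw [← hmap]
    exact (RingHom.map_det (Polynomial.evalRingHom t) Mp).symm ▸ rfl
  have hev := eventually_pos_of_coeff Mp.det D hdeg (hcoeff ▸ hpos)
  exact hev.mono (fun t ht => heval t ▸ ht)

end MinorPoly

lemma core_totPos (n : ℕ) (G : Matrix (Fin n) (Fin n) ℝ) (hG : unitri n G) :
    ∃ tp : ℝ, 0 < tp ∧ ∀ t : ℝ, tp < t →
      totPos n (G * NormedSpace.exp (t • lowerShift n)) := by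
  classical
  have hkey : ∀ (k : ℕ) (r c : Fin k → Fin n), ∀ᶠ t in Filter.atTop,
      (StrictMono r → StrictMono c → (∀ i, (c i : ℕ) ≤ (r i : ℕ)) →
        0 < ((G * expE n t).submatrix r c).det) := by
    intro k r c
    by_cases H : StrictMono r ∧ StrictMono c ∧ ∀ i, (c i : ℕ) ≤ (r i : ℕ)
    · exact (minor_eventually_pos hG r c H.1 H.2.1 H.2.2).mono (fun t ht _ _ _ => ht)
    · exact Filter.Eventually.of_forall (fun t h1 h2 h3 => absurd ⟨h1, h2, h3⟩ H)
  have h2 : ∀ᶠ t in Filter.atTop, ∀ k ∈ Finset.range (n+1), ∀ r c : Fin k → Fin n,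
      (StrictMono r → StrictMono c → (∀ i, (c i : ℕ) ≤ (r i : ℕ)) →
        0 < ((G * expE n t).submatrix r c).det) := by
    rw [Filter.eventually_all_finset]
    intro k _
    rw [Filter.eventually_all]
    intro r
    rw [Filter.eventually_all]
    intro c
    exact hkey k r c
  have h3 : ∀ᶠ t : ℝ in Filter.atTop, totPos n (G * NormedSpace.exp (t • lowerShift n)) := by
    refine h2.mono (fun t ht => ?_)
    rw [exp_lowerShift]
    constructor
    · exact unitri_mul_expE n G hG t
    · intro k r c hr hc hM
      have hcr : ∀ i, (c i : ℕ) ≤ (r i : ℕ) := by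
        by_contra hcon
        push_neg at hcon
        obtain ⟨i, hi⟩ := hcon
        obtain ⟨M, hM1, hM2⟩ := hM
        apply hM2
        refine TPAux.det_eq_zero_of_lt (fun j => ((r j : ℕ) : ℤ)) (fun j => ((c j : ℕ) : ℤ))
          ?_ ?_ (M.submatrix r c) ?_ i
          (show ((r i : ℕ) : ℤ) < ((c i : ℕ) : ℤ) by exact_mod_cast hi)
        · intro a b hab
          have := hr.monotone hab
          show ((r a : ℕ) : ℤ) ≤ ((r b : ℕ) : ℤ)
          exact_mod_cast Fin.le_def.1 this
        · intro a b hab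
          have := hc.monotone hab
          show ((c a : ℕ) : ℤ) ≤ ((c b : ℕ) : ℤ)
          exact_mod_cast Fin.le_def.1 this
        · intro a b hab
          refine hM1.2 (r a) (c b) ?_
          have h' : ((r a : ℕ) : ℤ) < ((c b : ℕ) : ℤ) := hab
          exact_mod_cast h'
      have hk : k ≤ n := by
        have := Fintype.card_le_of_injective r hr.injective
        simpa using this
      exact ht k (Finset.mem_range.2 (by omega)) r c hr hc hcr
  obtain ⟨a, ha⟩ := Filter.eventually_atTop.1 h3
  refine ⟨max a 1, lt_of_lt_of_le zero_lt_one (le_max_right a 1), fun t htp => ?_⟩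
  exact ha t (le_of_lt (lt_of_le_of_lt (le_max_left a 1) htp))

lemma Pdiag_mul_self (n : ℕ) : Pdiag n * Pdiag n = 1 := by
  rw [Pdiag, Matrix.diagonal_mul_diagonal]
  convert Matrix.diagonal_one
  rw [← pow_add]
  rw [← two_mul]
  rw [pow_mul]
  norm_num

lemma Pdiag_conj_unitri (n : ℕ) (G : Matrix (Fin n) (Fin n) ℝ) (hG : unitri n G) :
    unitri n (Pdiag n * G * Pdiag n) := by
  have hentry : ∀ a b, (Pdiag n * G * Pdiag n) a b
      = (-1 : ℝ) ^ (a : ℕ) * G a b * (-1 : ℝ) ^ (b : ℕ) := by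
    intro a b
    rw [Pdiag, Matrix.mul_diagonal, Matrix.diagonal_mul]
  constructor
  · intro a
    rw [hentry, hG.1 a, mul_one, ← pow_add, ← two_mul, pow_mul]
    norm_num
  · intro a b hab
    rw [hentry, hG.2 a b hab]
    ring

lemma Pdiag_conj_expE (n : ℕ) (t : ℝ) :
    Pdiag n * expE n t * Pdiag n = expE n (-t) := by
  ext a b
  have hentry : (Pdiag n * expE n t * Pdiag n) a b
      = (-1 : ℝ) ^ (a : ℕ) * (expE n t a b) * (-1 : ℝ) ^ (b : ℕ) := by
    rw [Pdiag, Matrix.mul_diagonal, Matrix.diagonal_mul]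
  rw [hentry]
  show (-1 : ℝ) ^ (a : ℕ) * (TPAux.g ((a:ℤ) - (b:ℤ)) * t ^ ((a:ℕ) - (b:ℕ))) * (-1 : ℝ) ^ (b : ℕ)
      = TPAux.g ((a:ℤ) - (b:ℤ)) * (-t) ^ ((a:ℕ) - (b:ℕ))
  by_cases hab : (b : ℕ) ≤ (a : ℕ)
  · have hpow : (-1 : ℝ) ^ (a : ℕ) = (-1 : ℝ) ^ ((a : ℕ) - (b : ℕ)) * (-1 : ℝ) ^ (b : ℕ) := by
      rw [← pow_add, Nat.sub_add_cancel hab]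
    rw [hpow, neg_pow (t) ((a:ℕ) - (b:ℕ))]
    have hsq : ((-1 : ℝ) ^ (b : ℕ)) * ((-1 : ℝ) ^ (b : ℕ)) = 1 := by
      rw [← pow_add, ← two_mul, pow_mul]
      norm_num
    have hre : (-1 : ℝ) ^ ((a:ℕ) - (b:ℕ)) * (-1 : ℝ) ^ (b : ℕ)
          * (TPAux.g ((a:ℤ) - (b:ℤ)) * t ^ ((a:ℕ) - (b:ℕ))) * (-1 : ℝ) ^ (b : ℕ)
        = ((-1 : ℝ) ^ (b : ℕ) * (-1 : ℝ) ^ (b : ℕ))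
          * (TPAux.g ((a:ℤ) - (b:ℤ)) * ((-1 : ℝ) ^ ((a:ℕ) - (b:ℕ)) * t ^ ((a:ℕ) - (b:ℕ)))) := by
      ring
    rw [hre, hsq, one_mul]
  · rw [TPAux.g_neg (by omega)]
    ring

theorem eventually_totPos_totNeg' (n : ℕ) (G : Matrix (Fin n) (Fin n) ℝ) (hG : unitri n G) :
    (∃ tp : ℝ, 0 < tp ∧ ∀ t : ℝ, tp < t →
        totPos n (G * NormedSpace.exp (t • lowerShift n))) ∧
    (∃ tm : ℝ, tm < 0 ∧ ∀ t : ℝ, t < tm →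
        totNeg n (G * NormedSpace.exp (t • lowerShift n))) := by
  constructor
  · exact core_totPos n G hG
  · obtain ⟨tp, htp, h⟩ := core_totPos n (Pdiag n * G * Pdiag n) (Pdiag_conj_unitri n G hG)
    refine ⟨-tp, by linarith, fun t ht => ?_⟩
    have hconj : Pdiag n * (G * NormedSpace.exp (t • lowerShift n)) * Pdiag n
        = (Pdiag n * G * Pdiag n) * NormedSpace.exp ((-t) • lowerShift n) := by
      rw [exp_lowerShift, exp_lowerShift, ← Pdiag_conj_expE n t]
      have hPP := Pdiag_mul_self n
      calc Pdiag n * (G * expE n t) * Pdiag n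
          = Pdiag n * G * ((Pdiag n * Pdiag n) * (expE n t * Pdiag n)) := by
            rw [hPP, one_mul]
            simp only [Matrix.mul_assoc]
        _ = Pdiag n * G * Pdiag n * (Pdiag n * expE n t * Pdiag n) := by
            simp only [Matrix.mul_assoc]
    show totPos n (Pdiag n * (G * NormedSpace.exp (t • lowerShift n)) * Pdiag n)
    rw [hconj]
    exact h (-t) (by linarith)


/-- for every `G ∈ Lo_n^1` there is `t_+ > 0` with `G·exp(tN)` totally
positive for all `t > t_+`, and `t_- < 0` with `G·exp(tN)` totally negative for all
`t < t_-`. -/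
theorem eventually_totPos_totNeg (G : Matrix (Fin n) (Fin n) ℝ) (hG : unitri n G) :
    (∃ tp : ℝ, 0 < tp ∧ ∀ t : ℝ, tp < t →
        totPos n (G * NormedSpace.exp (t • lowerShift n))) ∧
    (∃ tm : ℝ, tm < 0 ∧ ∀ t : ℝ, t < tm →
        totNeg n (G * NormedSpace.exp (t • lowerShift n))) := by
  exact eventually_totPos_totNeg' n G hG
end

section
/- If L_0 ∈ Lo_n^1 lies in the Bruhat cell Bru_{ρ_0} and ρ_0 ◁ ρ_1 = ρ_0 a_j is a Bruhat cover by an adjacent transposition a_j, then for any t ≠ 0 the matrix L_0 · λ_j(t) lies in the Bruhat cell Bru_{ρ_1}, where λ_j(t) = exp(t 𝔩_j). -/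
open Matrix

variable (n : ℕ)

/-- Upper triangular. -/
def upTri (U : Matrix (Fin n) (Fin n) ℝ) : Prop :=
  ∀ i j : Fin n, (j : ℕ) < (i : ℕ) → U i j = 0

/-- The permutation matrix of `ρ`: `e_i^⊤ P_ρ = e_{ρ(i)}^⊤`. -/
def Pmat (ρ : Equiv.Perm (Fin n)) : Matrix (Fin n) (Fin n) ℝ :=
  Matrix.of fun i j => if ρ i = j then 1 else 0

/-- The Bruhat cell `Bru_ρ ⊆ Lo_n^1`. -/
def Bru (ρ : Equiv.Perm (Fin n)) : Set (Matrix (Fin n) (Fin n) ℝ) :=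
  {L | unitri n L ∧ ∃ U₁ U₂ : Matrix (Fin n) (Fin n) ℝ,
    upTri n U₁ ∧ upTri n U₂ ∧ IsUnit U₁.det ∧ IsUnit U₂.det ∧
    L = U₁ * Pmat n ρ * U₂}

/-- Number of inversions of a permutation. -/
def invCount (σ : Equiv.Perm (Fin n)) : ℕ :=
  (Finset.univ.filter fun p : Fin n × Fin n => p.1 < p.2 ∧ σ p.2 < σ p.1).card

/-- The matrix `𝔩_j` with a single entry `1` in position `(j+1, j)`. -/
def lmat (j : Fin n) : Matrix (Fin n) (Fin n) ℝ :=
  Matrix.of fun a b => if (a : ℕ) = (j : ℕ) + 1 ∧ b = j then 1 else 0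

namespace BruAux

variable {n : ℕ}

/-- single-entry matrix -/
def Emat (x y : Fin n) (c : ℝ) : Matrix (Fin n) (Fin n) ℝ :=
  Matrix.of fun a b => if a = x ∧ b = y then c else 0

lemma Emat_apply (x y : Fin n) (c : ℝ) (a b : Fin n) :
    Emat x y c a b = if a = x ∧ b = y then c else 0 := rfl

lemma Emat_mul (x y : Fin n) (c : ℝ) (A : Matrix (Fin n) (Fin n) ℝ) :
    Emat x y c * A = Matrix.of fun a b => if a = x then c * A y b else 0 := by
  ext a b
  simp only [Matrix.mul_apply, Emat, Matrix.of_apply, ite_mul, zero_mul]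
  by_cases h : a = x
  · subst h
    simp [Finset.sum_ite_eq']
  · simp [h]

lemma mul_Emat (x y : Fin n) (c : ℝ) (A : Matrix (Fin n) (Fin n) ℝ) :
    A * Emat x y c = Matrix.of fun a b => if b = y then A a x * c else 0 := by
  ext a b
  simp only [Matrix.mul_apply, Emat, Matrix.of_apply, mul_ite, mul_zero]
  by_cases h : b = y
  · subst h
    simp [Finset.sum_ite_eq]
  · simp [h]

lemma Emat_mul_Emat_same (x y z : Fin n) (c d : ℝ) :
    Emat x y c * Emat y z d = Emat x z (c * d) := by
  rw [Emat_mul]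
  ext a b
  simp only [Matrix.of_apply, Emat_apply]
  by_cases h : a = x <;> simp [h, mul_ite]

lemma Emat_mul_Emat_ne {y x' : Fin n} (h : y ≠ x') (x y' : Fin n) (c d : ℝ) :
    Emat x y c * Emat x' y' d = 0 := by
  rw [Emat_mul]
  ext a b
  simp only [Matrix.of_apply, Emat_apply, Matrix.zero_apply]
  by_cases ha : a = x <;> simp [ha, h]

lemma Emat_add_Emat (x y : Fin n) (c d : ℝ) :
    Emat x y c + Emat x y d = Emat x y (c + d) := by
  ext a b
  simp only [Matrix.add_apply, Emat_apply]
  split_ifs <;> simp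

lemma Emat_zero (x y : Fin n) : Emat x y 0 = 0 := by
  ext a b; simp [Emat_apply]

lemma Pmat_mul (σ : Equiv.Perm (Fin n)) (A : Matrix (Fin n) (Fin n) ℝ) :
    Pmat n σ * A = Matrix.of fun i k => A (σ i) k := by
  ext i k
  simp only [Matrix.mul_apply, Pmat, Matrix.of_apply, ite_mul, one_mul, zero_mul]
  simp [Finset.sum_ite_eq]

lemma mul_Pmat (σ : Equiv.Perm (Fin n)) (A : Matrix (Fin n) (Fin n) ℝ) :
    A * Pmat n σ = Matrix.of fun i k => A i (σ⁻¹ k) := by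
  ext i k
  simp only [Matrix.mul_apply, Pmat, Matrix.of_apply, mul_ite, mul_one, mul_zero]
  have : ∀ c : Fin n, (σ c = k) ↔ (c = σ⁻¹ k) := by
    intro c; constructor
    · intro h; simp [← h]
    · intro h; simp [h]
  simp only [this]
  simp [Finset.sum_ite_eq']

lemma Pmat_mul_Pmat (σ τ : Equiv.Perm (Fin n)) :
    Pmat n σ * Pmat n τ = Pmat n (τ * σ) := by
  rw [Pmat_mul]
  ext i k
  simp [Pmat, Equiv.Perm.mul_apply]
  rfl

lemma Pmat_one : Pmat n (1 : Equiv.Perm (Fin n)) = 1 := by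
  ext i k
  simp [Pmat, Matrix.one_apply]
  rfl

lemma Emat_mul_Pmat (x y : Fin n) (c : ℝ) (σ : Equiv.Perm (Fin n)) :
    Emat x y c * Pmat n σ = Emat x (σ y) c := by
  rw [mul_Pmat]
  ext a b
  simp only [Matrix.of_apply, Emat_apply]
  by_cases hb : b = σ y
  · subst hb; simp
  · have : σ⁻¹ b ≠ y := by
      intro h; apply hb; rw [← h]; simp
    simp [hb, this]
    exact fun _ h => absurd h this

lemma Pmat_mul_Emat (x y : Fin n) (c : ℝ) (σ : Equiv.Perm (Fin n)) :
    Pmat n σ * Emat x y c = Emat (σ⁻¹ x) y c := by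
  rw [Pmat_mul]
  ext a b
  simp only [Matrix.of_apply, Emat_apply]
  by_cases ha : a = σ⁻¹ x
  · subst ha; simp
  · have : σ a ≠ x := by
      intro h; apply ha; rw [← h]; simp
    simp [ha, this]
    exact fun h _ => absurd h ha

lemma upTri_mul {A B : Matrix (Fin n) (Fin n) ℝ} (hA : upTri n A) (hB : upTri n B) :
    upTri n (A * B) := by
  intro i k h
  rw [Matrix.mul_apply]
  apply Finset.sum_eq_zero
  intro c _
  rcases lt_or_ge (c : ℕ) (i : ℕ) with hc | hc
  · rw [hA i c hc, zero_mul]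
  · rw [hB c k (lt_of_lt_of_le h hc), mul_zero]

lemma diag_mul {A B : Matrix (Fin n) (Fin n) ℝ} (hA : upTri n A) (hB : upTri n B)
    (i : Fin n) : (A * B) i i = A i i * B i i := by
  rw [Matrix.mul_apply]
  rw [Finset.sum_eq_single i]
  · intro c _ hc
    rcases lt_or_ge (c : ℕ) (i : ℕ) with h | h
    · rw [hA i c h, zero_mul]
    · have : (i : ℕ) < (c : ℕ) := lt_of_le_of_ne h (by simpa [Fin.ext_iff, eq_comm] using hc)
      rw [hB c i this, mul_zero]
  · intro h; exact absurd (Finset.mem_univ i) h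

lemma upTri_blockTriangular {A : Matrix (Fin n) (Fin n) ℝ} (hA : upTri n A) :
    A.BlockTriangular id := by
  intro i k h
  exact hA i k h

lemma diag_ne_zero {A : Matrix (Fin n) (Fin n) ℝ} (hA : upTri n A) (hd : IsUnit A.det)
    (i : Fin n) : A i i ≠ 0 := by
  rw [Matrix.det_of_upperTriangular (upTri_blockTriangular hA)] at hd
  rw [isUnit_iff_ne_zero] at hd
  exact Finset.prod_ne_zero_iff.mp hd i (Finset.mem_univ i)

lemma isUnit_det_of_upTri_diag {A : Matrix (Fin n) (Fin n) ℝ} (hA : upTri n A)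
    (hd : ∀ i, A i i ≠ 0) : IsUnit A.det := by
  rw [Matrix.det_of_upperTriangular (upTri_blockTriangular hA)]
  rw [isUnit_iff_ne_zero]
  exact Finset.prod_ne_zero_iff.mpr fun i _ => hd i

lemma unip_mul_unip {x y : Fin n} (h : x ≠ y) (c : ℝ) :
    ((1 : Matrix (Fin n) (Fin n) ℝ) + Emat x y c) * (1 + Emat x y (-c)) = 1 := by
  rw [add_mul, mul_add, mul_add, one_mul, one_mul, mul_one, Emat_mul_Emat_ne (Ne.symm h)]
  rw [add_zero, add_assoc, Emat_add_Emat]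
  simp [Emat_zero]

lemma isUnit_det_unip {x y : Fin n} (h : x ≠ y) (c : ℝ) :
    IsUnit ((1 : Matrix (Fin n) (Fin n) ℝ) + Emat x y c).det :=
  Matrix.isUnit_det_of_right_inverse (unip_mul_unip h c)

lemma upTri_unip {x y : Fin n} (h : (x : ℕ) < (y : ℕ)) (c : ℝ) :
    upTri n ((1 : Matrix (Fin n) (Fin n) ℝ) + Emat x y c) := by
  intro i k hk
  simp only [Matrix.add_apply, Matrix.one_apply, Emat_apply]
  rw [if_neg, if_neg]
  · simp
  · rintro ⟨rfl, rfl⟩; omega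
  · rintro rfl; omega

lemma swap_val {j jj : Fin n} (x : Fin n) :
    ((Equiv.swap j jj x : Fin n) : ℕ) =
      if x = j then (jj : ℕ) else if x = jj then (j : ℕ) else (x : ℕ) := by
  simp only [Equiv.swap_apply_def, apply_ite (Fin.val)]

lemma swap_lt_iff {j jj : Fin n} (hjj : (jj : ℕ) = (j : ℕ) + 1) (x y : Fin n) :
    Equiv.swap j jj x < Equiv.swap j jj y ↔
      ((x < y ∧ ¬(x = j ∧ y = jj)) ∨ (x = jj ∧ y = j)) := by
  simp only [Equiv.swap_apply_def]
  split_ifs <;> (simp only [Fin.lt_def, Fin.ext_iff] at *) <;> omega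

lemma invCount_swap_mul {j jj : Fin n} (hjj : (jj : ℕ) = (j : ℕ) + 1)
    (σ : Equiv.Perm (Fin n)) (h : σ⁻¹ j < σ⁻¹ jj) :
    invCount n (Equiv.swap j jj * σ) = invCount n σ + 1 := by
  have hσp : σ (σ⁻¹ j) = j := by simp
  have hσq : σ (σ⁻¹ jj) = jj := by simp
  have hset : (Finset.univ.filter fun pr : Fin n × Fin n =>
        pr.1 < pr.2 ∧ (Equiv.swap j jj * σ) pr.2 < (Equiv.swap j jj * σ) pr.1)
      = insert (σ⁻¹ j, σ⁻¹ jj)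
        (Finset.univ.filter fun pr : Fin n × Fin n => pr.1 < pr.2 ∧ σ pr.2 < σ pr.1) := by
    ext ⟨a, b⟩
    simp only [Finset.mem_insert, Finset.mem_filter, Finset.mem_univ, true_and,
      Prod.mk.injEq]
    simp only [Equiv.Perm.mul_apply]
    rw [swap_lt_iff hjj]
    constructor
    · rintro ⟨hab, (⟨hlt, -⟩ | ⟨hb, ha⟩)⟩
      · right; exact ⟨hab, hlt⟩
      · left
        constructor
        · rw [← ha]; simp
        · rw [← hb]; simp
    · rintro (⟨rfl, rfl⟩ | ⟨hab, hlt⟩)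
      · exact ⟨h, Or.inr ⟨hσq, hσp⟩⟩
      · refine ⟨hab, Or.inl ⟨hlt, ?_⟩⟩
        rintro ⟨hbj, hajj⟩
        have hb' : b = σ⁻¹ j := by rw [← hbj]; simp
        have ha' : a = σ⁻¹ jj := by rw [← hajj]; simp
        rw [hb', ha'] at hab
        exact absurd hab (not_lt.mpr h.le)
  unfold invCount
  rw [hset, Finset.card_insert_of_notMem]
  intro hmem
  simp only [Finset.mem_filter] at hmem
  have := hmem.2.2
  rw [hσp, hσq] at this
  simp [Fin.lt_def, hjj] at this

end BruAux

open BruAux in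
/-- if `L_0 ∈ Bru_{ρ_0}` and `ρ_0 ◁ ρ_1 = ρ_0 a_j` is a Bruhat cover
(`a_j` acting on values; one more inversion), then for all `t ≠ 0`,
`L_0 λ_j(t) ∈ Bru_{ρ_1}`, where `λ_j(t) = id + t 𝔩_j`. -/
theorem bruhat_cell_step (j : Fin n) (hj : (j : ℕ) + 1 < n)
    (ρ₀ ρ₁ : Equiv.Perm (Fin n))
    (h₁ : ρ₁ = Equiv.swap j ⟨(j : ℕ) + 1, hj⟩ * ρ₀)
    (hcov : invCount n ρ₁ = invCount n ρ₀ + 1)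
    (L₀ : Matrix (Fin n) (Fin n) ℝ) (hL₀ : L₀ ∈ Bru n ρ₀)
    (t : ℝ) (ht : t ≠ 0) :
    L₀ * ((1 : Matrix (Fin n) (Fin n) ℝ) + t • lmat n j) ∈ Bru n ρ₁ := by
  classical
  obtain ⟨hU, U₁, U₂, hT1, hT2, hd1, hd2, hLeq⟩ := hL₀
  set jj : Fin n := ⟨(j : ℕ) + 1, hj⟩ with hjjdef
  have hjjval : (jj : ℕ) = (j : ℕ) + 1 := rfl
  have hjne : j ≠ jj := by
    intro e
    have := congrArg Fin.val e
    omega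
  have hjne' : jj ≠ j := Ne.symm hjne
  set s : Equiv.Perm (Fin n) := Equiv.swap j jj with hs
  have hsj : s j = jj := Equiv.swap_apply_left j jj
  have hsjj : s jj = j := Equiv.swap_apply_right j jj
  have hsinv : s⁻¹ = s := Equiv.swap_inv j jj
  set p : Fin n := ρ₀⁻¹ j with hp
  set q : Fin n := ρ₀⁻¹ jj with hq
  have hρ1invj : ρ₁⁻¹ j = q := by
    rw [h₁, _root_.mul_inv_rev, Equiv.Perm.mul_apply, hsinv, hsj]
  have hρ1invjj : ρ₁⁻¹ jj = p := by
    rw [h₁, _root_.mul_inv_rev, Equiv.Perm.mul_apply, hsinv, hsjj]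
  -- the cover condition forces p < q
  have hpq : p < q := by
    by_contra hnot
    have hne : p ≠ q := by
      intro e
      exact hjne (by simpa [hp, hq] using congrArg ρ₀ e)
    have hqp : q < p := lt_of_le_of_ne (not_lt.mp hnot) (Ne.symm hne)
    have h2 := BruAux.invCount_swap_mul hjjval ρ₁ (by rw [hρ1invj, hρ1invjj]; exact hqp)
    rw [← hs] at h2
    have h3 : s * ρ₁ = ρ₀ := by
      rw [h₁, ← mul_assoc, hs, Equiv.swap_mul_self, one_mul]
    rw [h3, hcov] at h2
    omega
  have hpqne : p ≠ q := hpq.ne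
  have hpqval : (p : ℕ) < (q : ℕ) := hpq
  -- the matrices in the factorization of λ_j(t)
  set V₁ : Matrix (Fin n) (Fin n) ℝ :=
    1 + Emat j j (-1/t - 1) + Emat j jj 1 + Emat jj jj (t - 1) with hV₁
  set V₂ : Matrix (Fin n) (Fin n) ℝ := 1 + Emat j jj (1/t) with hV₂
  have hlmatE : t • lmat n j = Emat jj j t := by
    ext a b
    simp only [Matrix.smul_apply, lmat, Emat_apply, Matrix.of_apply, smul_eq_mul,
      mul_ite, mul_one, mul_zero]
    split_ifs with h1 h2 h2 <;>
      first
      | rfl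
      | (exfalso; simp only [Fin.ext_iff] at h1 h2; omega)
  have hlam : V₁ * Pmat n s * V₂ = 1 + t • lmat n j := by
    have e1 : V₁ * Pmat n s =
        Pmat n s + Emat j jj (-1/t - 1) + Emat j j 1 + Emat jj j (t - 1) := by
      rw [hV₁, add_mul, add_mul, add_mul, one_mul, Emat_mul_Pmat, Emat_mul_Pmat,
        Emat_mul_Pmat, hsj, hsjj]
    rw [e1, hV₂, mul_add, mul_one, add_mul, add_mul, add_mul, Pmat_mul_Emat, hsinv, hsj,
      Emat_mul_Emat_ne (Ne.symm hjne), Emat_mul_Emat_same, Emat_mul_Emat_same, hlmatE]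
    ext a b
    simp only [Matrix.add_apply, Matrix.one_apply, Emat_apply, Pmat, Matrix.of_apply,
      Matrix.zero_apply]
    by_cases haj : a = j
    · by_cases hbj : b = j
      · simp [haj, hbj, hsj, hjne, hjne']
      · by_cases hbjj : b = jj
        · simp [haj, hbjj, hbj, hsj, hjne, hjne'] <;> ring
        · simp [haj, hbj, hbjj, hsj, hjne, hjne', Ne.symm hbj, Ne.symm hbjj]
    · by_cases hajj : a = jj
      · by_cases hbj : b = j
        · simp [hajj, hbj, hsjj, hjne, hjne'] <;> ring
        · by_cases hbjj : b = jj
          · simp [hajj, hbjj, hbj, hsjj, hjne, hjne'] <;> field_simp <;> ring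
          · simp [hajj, hbj, hbjj, hsjj, hjne, hjne', Ne.symm hbj, Ne.symm hbjj]
      · have hsa : s a = a := Equiv.swap_apply_of_ne_of_ne haj hajj
        simp [hsa, haj, hajj, hjne, hjne']
  -- upper-triangularity and diagonal of V₁
  have hV₁up : upTri n V₁ := by
    intro a b hba
    rw [hV₁]
    simp only [Matrix.add_apply, Matrix.one_apply, Emat_apply]
    have h1 : a ≠ b := by intro e; rw [e] at hba; omega
    rw [if_neg h1, if_neg, if_neg, if_neg]
    · simp
    · rintro ⟨e1, e2⟩; rw [e1, e2] at hba; omega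
    · rintro ⟨e1, e2⟩; rw [e1, e2] at hba; omega
    · rintro ⟨e1, e2⟩; rw [e1, e2] at hba; omega
  have hV₁diag : ∀ i, V₁ i i ≠ 0 := by
    intro i
    rw [hV₁]
    simp only [Matrix.add_apply, Matrix.one_apply_eq, Emat_apply]
    by_cases hij : i = j
    · rw [if_pos ⟨hij, hij⟩, if_neg (fun h => hjne (hij.symm.trans h.2)),
        if_neg (fun h => hjne (hij.symm.trans h.1))]
      have : (1 : ℝ) + (-1/t - 1) + 0 + 0 = -1/t := by ring
      rw [this]
      exact div_ne_zero (by norm_num) ht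
    · by_cases hijj : i = jj
      · rw [if_neg (fun h => hij h.1), if_neg (fun h => hij h.1), if_pos ⟨hijj, hijj⟩]
        have : (1 : ℝ) + 0 + 0 + (t - 1) = t := by ring
        rw [this]
        exact ht
      · rw [if_neg (fun h => hij h.1), if_neg (fun h => hij h.1),
          if_neg (fun h => hijj h.1)]
        norm_num
  have hV₂up : upTri n V₂ := upTri_unip (by omega) (1/t)
  set W : Matrix (Fin n) (Fin n) ℝ := U₂ * V₁ with hW
  have hWup : upTri n W := upTri_mul hT2 hV₁up
  have hWdiag : ∀ i, W i i ≠ 0 := by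
    intro i
    rw [hW, diag_mul hT2 hV₁up]
    exact mul_ne_zero (diag_ne_zero hT2 hd2 i) (hV₁diag i)
  set W'' : Matrix (Fin n) (Fin n) ℝ := Pmat n s * W * Pmat n s with hW''
  have hW''app : ∀ a b, W'' a b = W (s a) (s b) := by
    intro a b
    rw [hW'', mul_Pmat, Pmat_mul]
    simp only [Matrix.of_apply, hsinv]
  set c' : ℝ := W j jj / W jj jj with hc'
  set T : Matrix (Fin n) (Fin n) ℝ := (1 + Emat jj j (-c')) * W'' with hT
  have hTfact : (1 + Emat jj j c') * T = W'' := by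
    rw [hT, ← mul_assoc, unip_mul_unip (Ne.symm hjne), one_mul]
  have hTapp : ∀ a b, T a b = W'' a b + (if a = jj then -c' * W'' j b else 0) := by
    intro a b
    rw [hT, add_mul, one_mul, Emat_mul]
    simp only [Matrix.add_apply, Matrix.of_apply]
  have hTup : upTri n T := by
    intro a b hba
    rw [hTapp]
    by_cases haj : a = jj
    · rw [haj] at hba ⊢
      rw [if_pos rfl, hW''app, hW''app, hsjj, hsj]
      by_cases hbj : b = j
      · rw [hbj, hsj]
        have hcc : c' * W jj jj = W j jj := div_mul_cancel₀ _ (hWdiag jj)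
        rw [neg_mul, hcc]
        ring
      · have hbj' : (b : ℕ) ≠ (j : ℕ) := fun e => hbj (Fin.ext e)
        have hbv : (b : ℕ) < (j : ℕ) := by omega
        have hbjj : b ≠ jj := by
          intro e; rw [e] at hbv; omega
        have hsb : s b = b := Equiv.swap_apply_of_ne_of_ne hbj hbjj
        rw [hsb, hWup j b hbv, hWup jj b (by omega)]
        ring
    · rw [if_neg haj, add_zero, hW''app]
      apply hWup
      have haj' : (a : ℕ) ≠ (jj : ℕ) := fun e => haj (Fin.ext e)
      rw [hs, swap_val, swap_val]
      split_ifs with e1 e2 e3 e4 e5 e6 <;>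
        (first
          | omega
          | (simp only [Fin.ext_iff] at e1 e2 e3 e4 e5 e6 ⊢ <;> omega)
          | (simp only [Fin.ext_iff] at e1 e2 e3 e4 ⊢ <;> omega)
          | (simp only [Fin.ext_iff] at e1 e2 e3 ⊢ <;> omega)
          | (simp only [Fin.ext_iff] at e1 e2 ⊢ <;> omega)
          | (simp only [Fin.ext_iff] at e1 ⊢ <;> omega))
  have hTdiag : ∀ a, T a a ≠ 0 := by
    intro a
    rw [hTapp]
    by_cases haj : a = jj
    · rw [haj, if_pos rfl, hW''app, hW''app, hsjj, hsj, hWup jj j (by omega)]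
      simpa using hWdiag j
    · rw [if_neg haj, add_zero, hW''app]
      exact hWdiag (s a)
  have hTdet : IsUnit T.det := isUnit_det_of_upTri_diag hTup hTdiag
  -- permutation matrix identities
  have hPsPs : Pmat n s * Pmat n s = 1 := by
    rw [Pmat_mul_Pmat, hs, Equiv.swap_mul_self, Pmat_one]
  have hP01 : Pmat n ρ₀ * Pmat n s = Pmat n ρ₁ := by
    rw [Pmat_mul_Pmat, ← h₁]
  have hcomm : Pmat n ρ₁ * (1 + Emat jj j c') = (1 + Emat p q c') * Pmat n ρ₁ := by
    rw [mul_add, mul_one, add_mul, one_mul, Pmat_mul_Emat, Emat_mul_Pmat]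
    have e2 : ρ₁ q = j := by
      rw [h₁, Equiv.Perm.mul_apply, hq, show ρ₀ (ρ₀⁻¹ jj) = jj from Equiv.apply_symm_apply ρ₀ jj, hsjj]
    rw [hρ1invjj, e2]
  have hWPs : W * Pmat n s = Pmat n s * W'' := by
    rw [hW'', ← mul_assoc, ← mul_assoc, hPsPs, one_mul]
  -- the key factorization
  have key : U₁ * Pmat n ρ₀ * U₂ * (V₁ * Pmat n s * V₂)
      = U₁ * (1 + Emat p q c') * Pmat n ρ₁ * (T * V₂) := by
    calc U₁ * Pmat n ρ₀ * U₂ * (V₁ * Pmat n s * V₂)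
        = (U₁ * Pmat n ρ₀) * (W * Pmat n s) * V₂ := by
          rw [hW]; simp only [mul_assoc]
      _ = (U₁ * Pmat n ρ₀) * (Pmat n s * W'') * V₂ := by rw [hWPs]
      _ = (U₁ * (Pmat n ρ₀ * Pmat n s)) * W'' * V₂ := by simp only [mul_assoc]
      _ = (U₁ * Pmat n ρ₁) * W'' * V₂ := by rw [hP01]
      _ = (U₁ * Pmat n ρ₁) * ((1 + Emat jj j c') * T) * V₂ := by rw [hTfact]
      _ = U₁ * (Pmat n ρ₁ * (1 + Emat jj j c')) * (T * V₂) := by simp only [mul_assoc]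
      _ = U₁ * ((1 + Emat p q c') * Pmat n ρ₁) * (T * V₂) := by rw [hcomm]
      _ = U₁ * (1 + Emat p q c') * Pmat n ρ₁ * (T * V₂) := by simp only [mul_assoc]
  -- unit lower triangular part
  have hunitri : unitri n (L₀ * (1 + t • lmat n j)) := by
    have hform : L₀ * (1 + t • lmat n j)
        = L₀ + Matrix.of (fun a b => if b = j then L₀ a jj * t else 0) := by
      rw [mul_add, mul_one, hlmatE, mul_Emat]
    rw [hform]
    constructor
    · intro i
      simp only [Matrix.add_apply, Matrix.of_apply]
      by_cases hij : i = j
      · have hival : (i : ℕ) = (j : ℕ) := congrArg Fin.val hij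
        rw [if_pos hij, hU.1 i, hU.2 i jj (by omega)]
        ring
      · rw [if_neg hij, hU.1 i, add_zero]
    · intro i k hik
      simp only [Matrix.add_apply, Matrix.of_apply]
      rw [hU.2 i k hik]
      by_cases hkj : k = j
      · have hkval : (k : ℕ) = (j : ℕ) := congrArg Fin.val hkj
        rw [if_pos hkj, hU.2 i jj (by omega)]
        ring
      · rw [if_neg hkj]; ring
  refine ⟨hunitri, U₁ * (1 + Emat p q c'), T * V₂, ?_, ?_, ?_, ?_, ?_⟩
  · exact upTri_mul hT1 (upTri_unip hpqval c')
  · exact upTri_mul hTup hV₂up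
  · rw [Matrix.det_mul]
    exact hd1.mul (isUnit_det_unip hpqne c')
  · rw [Matrix.det_mul]
    exact hTdet.mul (isUnit_det_unip hjne (1/t))
  · rw [hLeq, ← hlam]
    exact key
end

section
/- Let n ≥ 2 and consider admissible cyclic words of length 2n. The totally positive word w_+ = (1,2,…,n,1',2',…,n') has rank 0, the totally negative word w_- has rank 2(n-2), every other admissible word w ∈ 𝔚⁺ satisfies 0 < rk(w) < 2(n-2), and m_{\{1,2\}}(w) > 0 if and only if rk(w) is even. -/
/-- Position of the (0-based) label `i % n` in the admissible cyclic word `w`. -/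
def posOf (n : ℕ) (hn : 0 < n) (w : ZMod (2 * n) ≃ Fin n × Bool) (i : ℕ) :
    ZMod (2 * n) :=
  w.symm ((⟨i % n, Nat.mod_lt i hn⟩ : Fin n), false)

/-- The counterclockwise distance (in positions, an element of `[0, 2n)`) from the
label `k` to the label `k+1`. -/
def arcδ (n : ℕ) (hn : 0 < n) (w : ZMod (2 * n) ≃ Fin n × Bool) (k : ℕ) : ℕ :=
  (posOf n hn w (k + 1) - posOf n hn w k).val

/-- Fold over the arcs `0, 1, …, k` between consecutive labels, producing
`(s, c, T)`: the number `s` of maximal monotone subsequences so far, the accumulated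
content `c` of the already-completed maximal monotone runs (in complete half-turns,
i.e. `n` position-units each), and the length `T` (in position-units) of the current
run.  `dir k` is the direction of arc `k` and `θ k` its length in position-units. -/
def rkAux (n : ℕ) (dir : ℕ → Bool) (θ : ℕ → ℕ) : ℕ → ℕ × ℕ × ℕ
  | 0 => (1, 0, θ 0)
  | k + 1 =>
    let r := rkAux n dir θ k
    if dir (k + 1) = dir k then (r.1, r.2.1, r.2.2 + θ (k + 1))
    else (r.1 + 1, r.2.1 + r.2.2 / n, θ (k + 1))

/-- The rank `rk(w) = 2·Cont(w) + s − 1` of an admissible cyclic word `w`, where `s` is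
the number of maximal monotone subsequences of the labels `1,…,n` and `Cont(w)` the
total number of complete half-turns of the corresponding immersed monotone arcs. -/
def rk (n : ℕ) (hn : 0 < n) (w : ZMod (2 * n) ≃ Fin n × Bool) : ℕ :=
  let dir : ℕ → Bool := fun k => decide (arcδ n hn w k < n)
  let θ : ℕ → ℕ := fun k => if arcδ n hn w k < n then arcδ n hn w k else 2 * n - arcδ n hn w k
  let r := rkAux n dir θ (n - 2)
  2 * (r.2.1 + r.2.2 / n) + r.1 - 1

/-- `w` is (a rotation of) the totally positive word `(1,2,…,n,1',…,n')`. -/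
def isPosWord (n : ℕ) (w : ZMod (2 * n) ≃ Fin n × Bool) : Prop :=
  ∃ r : ZMod (2 * n), ∀ i : Fin n, w.symm (i, false) = r + ((i : ℕ) : ZMod (2 * n))

/-- `w` is (a rotation of) the totally negative word (obtained from the totally
positive one by interchanging every even entry with its opposite and reading
backwards); its label `i` sits `(n-1)·i` positions counterclockwise of label `0`. -/
def isNegWord (n : ℕ) (w : ZMod (2 * n) ≃ Fin n × Bool) : Prop :=
  ∃ r : ZMod (2 * n), ∀ i : Fin n, w.symm (i, false) = r + (((n - 1) * (i : ℕ) : ℕ) : ZMod (2 * n))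

namespace RkAux

variable {n : ℕ} {dir : ℕ → Bool} {θ : ℕ → ℕ}

lemma fst_pos (k : ℕ) : 1 ≤ (rkAux n dir θ k).1 := by
  induction k with
  | zero => exact le_refl _
  | succ k ih => simp only [rkAux]; split <;> omega

lemma fst_eq_one {k : ℕ} (h : (rkAux n dir θ k).1 = 1) : ∀ j ≤ k, dir j = dir 0 := by
  induction k with
  | zero =>
    intro j hj
    interval_cases j
    rfl
  | succ k ih =>
    simp only [rkAux] at h
    split at h
    · rename_i hd
      intro j hj
      rcases Nat.lt_or_ge j (k+1) with h' | h'
      · exact ih h j (by omega)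
      · have hj1 : j = k + 1 := by omega
        subst hj1
        rw [hd]; exact ih h k (le_refl _)
    · have := fst_pos (n := n) (dir := dir) (θ := θ) k; omega

lemma parity (k : ℕ) : Odd (rkAux n dir θ k).1 ↔ dir k = dir 0 := by
  induction k with
  | zero => simp [rkAux]
  | succ k ih =>
    simp only [rkAux]
    split
    · rename_i hd
      rw [hd]; exact ih
    · rename_i hd
      constructor
      · intro hodd
        by_contra hne
        have h1 : dir k = dir 0 := by
          cases h0 : dir 0 <;> cases hk : dir k <;> cases hk1 : dir (k+1) <;>
            simp_all
        have := ih.mpr h1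
        simp only [Nat.odd_add_one] at hodd
        exact hodd this
      · intro h1
        have hk : dir k ≠ dir 0 := by
          cases h0 : dir 0 <;> cases hk : dir k <;> cases hk1 : dir (k+1) <;> simp_all
        have : ¬ Odd (rkAux n dir θ k).1 := fun ho => hk (ih.mp ho)
        simpa [Nat.odd_add_one] using this

lemma const_eval {k : ℕ} (h : ∀ j ≤ k, dir j = dir 0) :
    rkAux n dir θ k = (1, 0, ∑ j ∈ Finset.range (k+1), θ j) := by
  induction k with
  | zero => simp [rkAux]
  | succ k ih =>
    have hd : dir (k+1) = dir k := by
      rw [h (k+1) (le_refl _), h k (by omega)]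
    simp only [rkAux, hd, if_pos rfl, ih (fun j hj => h j (by omega)), if_true,
      eq_self_iff_true]
    simp [Finset.sum_range_succ]

lemma div_add_le (a b m : ℕ) (h : b < m) : (a + b) / m ≤ a / m + 1 := by
  calc (a + b) / m ≤ (a + m) / m := Nat.div_le_div_right (by omega)
  _ = a / m + 1 := Nat.add_div_right _ (by omega)

/-- `F k = 2*(C k + T k / n) + S k`. -/
def F (n : ℕ) (dir : ℕ → Bool) (θ : ℕ → ℕ) (k : ℕ) : ℕ :=
  2 * ((rkAux n dir θ k).2.1 + (rkAux n dir θ k).2.2 / n) + (rkAux n dir θ k).1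

lemma bound {k : ℕ} (h : ∀ j ≤ k, θ j < n) : F n dir θ k ≤ 2 * k + 1 := by
  induction k with
  | zero =>
    have h0 : θ 0 < n := h 0 (le_refl _)
    simp [F, rkAux, Nat.div_eq_of_lt h0]
  | succ k ih =>
    have ih' := ih (fun j hj => h j (by omega))
    have hθ : θ (k+1) < n := h (k+1) (le_refl _)
    simp only [F, rkAux] at *
    split
    · have hdiv : ((rkAux n dir θ k).2.2 + θ (k+1)) / n ≤ (rkAux n dir θ k).2.2 / n + 1 :=
        div_add_le _ _ _ hθ
      simp only []
      omega
    · have hdiv : θ (k+1) / n = 0 := Nat.div_eq_of_lt hθ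
      simp only [hdiv]
      omega

lemma eq_max {k : ℕ} (h : ∀ j ≤ k, θ j < n) (heq : F n dir θ k = 2 * k + 1) :
    ∀ j ≤ k, dir j = dir 0 := by
  induction k with
  | zero => intro j hj; interval_cases j; rfl
  | succ k ih =>
    have hb := bound (n := n) (dir := dir) (θ := θ) (k := k) (fun j hj => h j (by omega))
    have hθ : θ (k+1) < n := h (k+1) (le_refl _)
    by_cases hd : dir (k+1) = dir k
    · have hstep : F n dir θ (k+1) ≤ F n dir θ k + 2 := by
        simp only [F, rkAux, hd, eq_self_iff_true, if_true]
        have hdiv : ((rkAux n dir θ k).2.2 + θ (k+1)) / n ≤ (rkAux n dir θ k).2.2 / n + 1 :=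
          div_add_le _ _ _ hθ
        omega
      have hFk : F n dir θ k = 2 * k + 1 := by omega
      intro j hj
      rcases Nat.lt_or_ge j (k+1) with h' | h'
      · exact ih (fun j hj => h j (by omega)) hFk j (by omega)
      · have : j = k + 1 := by omega
        subst this
        rw [hd]
        exact ih (fun j hj => h j (by omega)) hFk k (le_refl _)
    · exfalso
      have hstep : F n dir θ (k+1) = F n dir θ k + 1 := by
        simp only [F, rkAux, if_neg hd]
        have hdiv : θ (k+1) / n = 0 := Nat.div_eq_of_lt hθ
        simp only [hdiv]
        omega
      omega

end RkAux


section Aux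

variable {n : ℕ} (hn : 0 < n) (w : ZMod (2 * n) ≃ Fin n × Bool)

lemma posOf_succ (k : ℕ) :
    posOf n hn w (k + 1) = posOf n hn w k + ((arcδ n hn w k : ℕ) : ZMod (2 * n)) := by
  haveI : NeZero (2 * n) := ⟨by omega⟩
  unfold arcδ
  rw [ZMod.natCast_rightInverse _]
  ring

lemma posOf_telescope (m : ℕ) :
    posOf n hn w m = posOf n hn w 0 + ((∑ k ∈ Finset.range m, arcδ n hn w k : ℕ) : ZMod (2 * n)) := by
  induction m with
  | zero => simp
  | succ m ih =>
    rw [posOf_succ hn w m, ih, Finset.sum_range_succ]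
    push_cast
    ring

lemma arcδ_lt (k : ℕ) : arcδ n hn w k < 2 * n := by
  haveI : NeZero (2 * n) := ⟨by omega⟩
  exact ZMod.val_lt _

lemma posOf_inj {i j : ℕ} (hi : i < n) (hj : j < n) (h : posOf n hn w i = posOf n hn w j) :
    i = j := by
  unfold posOf at h
  have := w.symm.injective h
  simp only [Prod.mk.injEq, Fin.mk.injEq] at this
  rw [Nat.mod_eq_of_lt hi, Nat.mod_eq_of_lt hj] at this
  exact this.1

lemma posOf_ne_antipode
    (hadm : ∀ ℓ : Fin n, w.symm (ℓ, true) = w.symm (ℓ, false) + (n : ZMod (2 * n)))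
    {i j : ℕ} (hi : i < n) (hj : j < n) :
    posOf n hn w i ≠ posOf n hn w j + (n : ZMod (2 * n)) := by
  intro h
  have h2 : posOf n hn w i = w.symm ((⟨j % n, Nat.mod_lt j hn⟩ : Fin n), true) := by
    rw [hadm]; exact h
  have := w.symm.injective h2
  simp only [Prod.mk.injEq] at this
  exact Bool.false_ne_true this.2

lemma arcδ_ne_zero {k : ℕ} (hk : k + 1 < n) : arcδ n hn w k ≠ 0 := by
  intro h
  unfold arcδ at h
  haveI : NeZero (2 * n) := ⟨by omega⟩
  have h2 : posOf n hn w (k + 1) = posOf n hn w k := by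
    have h3 : posOf n hn w (k+1) - posOf n hn w k = 0 := by
      have := ZMod.natCast_rightInverse (n := 2*n) (posOf n hn w (k+1) - posOf n hn w k)
      rw [h] at this
      simpa using this.symm
    linear_combination h3
  exact absurd (posOf_inj hn w hk (by omega) h2) (by omega)

lemma arcδ_ne_n (hadm : ∀ ℓ : Fin n, w.symm (ℓ, true) = w.symm (ℓ, false) + (n : ZMod (2 * n)))
    {k : ℕ} (hk : k + 1 < n) : arcδ n hn w k ≠ n := by
  intro h
  haveI : NeZero (2 * n) := ⟨by omega⟩
  have h2 : posOf n hn w (k + 1) = posOf n hn w k + (n : ZMod (2 * n)) := by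
    have := posOf_succ hn w k
    rw [h] at this
    exact this
  exact posOf_ne_antipode hn w hadm (by omega) (by omega) h2

end Aux


section Main

variable {n : ℕ} (hn : 0 < n) (w : ZMod (2 * n) ≃ Fin n × Bool)

/-- abbreviations used in `rk`. -/
def dirW (n : ℕ) (hn : 0 < n) (w : ZMod (2 * n) ≃ Fin n × Bool) : ℕ → Bool :=
  fun k => decide (arcδ n hn w k < n)

def thetaW (n : ℕ) (hn : 0 < n) (w : ZMod (2 * n) ≃ Fin n × Bool) : ℕ → ℕ :=
  fun k => if arcδ n hn w k < n then arcδ n hn w k else 2 * n - arcδ n hn w k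

lemma rk_eq_F : rk n hn w = RkAux.F n (dirW n hn w) (thetaW n hn w) (n - 2) - 1 := rfl

lemma posOf_fin (i : Fin n) : posOf n hn w i = w.symm (i, false) := by
  unfold posOf
  congr 2
  · exact Fin.ext (Nat.mod_eq_of_lt i.isLt)

lemma theta_lt (hadm : ∀ ℓ : Fin n, w.symm (ℓ, true) = w.symm (ℓ, false) + (n : ZMod (2 * n)))
    {k : ℕ} (hk : k + 1 < n) : 1 ≤ thetaW n hn w k ∧ thetaW n hn w k < n := by
  have h0 := arcδ_ne_zero hn w hk
  have h1 := arcδ_ne_n hn w hadm hk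
  have h2 := arcδ_lt hn w k
  unfold thetaW
  split <;> omega

lemma word_of_const (c : ℕ) (h : ∀ k, k + 1 < n → arcδ n hn w k = c) :
    ∀ i : Fin n, w.symm (i, false) = posOf n hn w 0 + ((c * (i : ℕ) : ℕ) : ZMod (2 * n)) := by
  intro i
  rw [← posOf_fin hn w i, posOf_telescope hn w i]
  congr 2
  rw [Finset.sum_congr rfl (fun k hk => h k (by
    have := Finset.mem_range.mp hk
    have := i.isLt
    omega))]
  simp [Finset.sum_const, mul_comm]

lemma const_of_word (r : ZMod (2 * n)) (c : ℕ) (hc : c < 2 * n)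
    (h : ∀ i : Fin n, w.symm (i, false) = r + ((c * (i : ℕ) : ℕ) : ZMod (2 * n))) :
    ∀ k, k + 1 < n → arcδ n hn w k = c := by
  intro k hk
  have hp : ∀ m : ℕ, m < n → posOf n hn w m = r + ((c * m : ℕ) : ZMod (2 * n)) := by
    intro m hm
    rw [show (m : ℕ) = ((⟨m, hm⟩ : Fin n) : ℕ) from rfl, posOf_fin hn w ⟨m, hm⟩, h]
  unfold arcδ
  rw [hp (k + 1) hk, hp k (by omega)]
  have hmul : c * (k + 1) = c * k + c := by ring
  rw [hmul]
  push_cast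
  have : r + ((c : ZMod (2 * n)) * k + c) - (r + (c : ZMod (2 * n)) * k) = (c : ZMod (2 * n)) := by
    ring
  rw [this, ZMod.val_cast_of_lt hc]

lemma rk_const (hn2 : 2 ≤ n) (c : ℕ) (hc2 : c < n)
    (h : ∀ k, k + 1 < n → arcδ n hn w k = c) :
    rk n hn w = 2 * (((n - 1) * c) / n) := by
  have hδ : ∀ j, j ≤ n - 2 → arcδ n hn w j = c := fun j hj => h j (by omega)
  have hdir : ∀ j ≤ n - 2, dirW n hn w j = dirW n hn w 0 := by
    intro j hj
    unfold dirW
    rw [hδ j hj, hδ 0 (by omega)]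
  have hth : ∀ j ∈ Finset.range (n - 2 + 1), thetaW n hn w j = c := by
    intro j hj
    unfold thetaW
    rw [hδ j (by have := Finset.mem_range.mp hj; omega)]
    exact if_pos hc2
  rw [rk_eq_F, RkAux.F, RkAux.const_eval hdir]
  simp only []
  rw [Finset.sum_congr rfl hth]
  simp only [Finset.sum_const, Finset.card_range, smul_eq_mul]
  have hcard : n - 2 + 1 = n - 1 := by omega
  rw [hcard]
  omega

end Main


/-- for `n ≥ 2` and `w ∈ 𝔚⁺` admissible: the totally positive word has
rank `0`, the totally negative word has rank `2(n-2)`, every other word has rank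
strictly between, and `m_{{1,2}}(w) > 0` iff `rk(w)` is even. -/
theorem rank_range (n : ℕ) (hn : 2 ≤ n) (w : ZMod (2 * n) ≃ Fin n × Bool)
    (hadm : ∀ ℓ : Fin n, w.symm (ℓ, true) = w.symm (ℓ, false) + (n : ZMod (2 * n)))
    (hWplus : arcδ n (by omega) w (n - 2) < n) :
    (isPosWord n w → rk n (by omega) w = 0) ∧
    (isNegWord n w → rk n (by omega) w = 2 * (n - 2)) ∧
    (¬ isPosWord n w → ¬ isNegWord n w →
      0 < rk n (by omega) w ∧ rk n (by omega) w < 2 * (n - 2)) ∧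
    (arcδ n (by omega) w 0 < n ↔ Even (rk n (by omega) w)) := by
  have hn0 : 0 < n := by omega
  haveI : NeZero (2 * n) := ⟨by omega⟩
  have hWp : arcδ n hn0 w (n - 2) < n := hWplus
  set dir := dirW n hn0 w with hdir_def
  set θ := thetaW n hn0 w with hθ_def
  have hθlt : ∀ j ≤ n - 2, θ j < n := fun j hj =>
    (theta_lt hn0 w hadm (k := j) (by omega)).2
  have hθ1 : ∀ j ≤ n - 2, 1 ≤ θ j := fun j hj =>
    (theta_lt hn0 w hadm (k := j) (by omega)).1
  set R := rkAux n dir θ (n - 2) with hR_def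
  have hrk : rk n hn0 w = 2 * (R.2.1 + R.2.2 / n) + R.1 - 1 := rfl
  have hS1 : 1 ≤ R.1 := RkAux.fst_pos (n - 2)
  have hdirlast : dir (n - 2) = true := decide_eq_true hWp
  -- Part (a)
  have parta : isPosWord n w → rk n hn0 w = 0 := by
    rintro ⟨r, hr⟩
    have harc : ∀ k, k + 1 < n → arcδ n hn0 w k = 1 := by
      apply const_of_word hn0 w r 1 (by omega)
      intro i
      rw [one_mul]
      exact hr i
    rw [rk_const hn0 w hn 1 (by omega) harc]
    rw [mul_one, Nat.div_eq_of_lt (by omega), mul_zero]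
  -- Part (b)
  have partb : isNegWord n w → rk n hn0 w = 2 * (n - 2) := by
    rintro ⟨r, hr⟩
    have harc : ∀ k, k + 1 < n → arcδ n hn0 w k = n - 1 :=
      const_of_word hn0 w r (n - 1) (by omega) hr
    rw [rk_const hn0 w hn (n - 1) (by omega) harc]
    have hsq : (n - 1) * (n - 1) = n * (n - 2) + 1 := by
      obtain ⟨m, rfl⟩ : ∃ m, n = m + 2 := ⟨n - 2, by omega⟩
      show (m + 1) * (m + 1) = (m + 2) * m + 1
      ring
    rw [hsq, Nat.mul_add_div (by omega), Nat.div_eq_of_lt (by omega)]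
    omega
  -- rank zero implies positive
  have claimA : rk n hn0 w = 0 → isPosWord n w := by
    intro h0
    have hF : 2 * (R.2.1 + R.2.2 / n) + R.1 = 1 := by omega
    have hSone : R.1 = 1 := by omega
    have hconst := RkAux.fst_eq_one hSone
    have hEval := RkAux.const_eval (n := n) (θ := θ) hconst
    rw [← hR_def] at hEval
    rw [hEval] at hF
    simp only [] at hF
    have hrange : n - 2 + 1 = n - 1 := by omega
    rw [hrange] at hEval hF
    set Sθ := ∑ j ∈ Finset.range (n - 1), θ j with hS2_def
    have hS2lt : Sθ < n := by
      have : Sθ / n = 0 := by omega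
      exact ((Nat.div_eq_zero_iff).mp this).resolve_left (by omega)
    have hS2ge : n - 1 ≤ Sθ := by
      calc n - 1 = ∑ _j ∈ Finset.range (n - 1), 1 := by simp
      _ ≤ Sθ := Finset.sum_le_sum (fun j hj => hθ1 j (by
          have := Finset.mem_range.mp hj; omega))
    have hone : ∀ j ∈ Finset.range (n - 1), θ j = 1 := by
      intro j hj
      by_contra hne
      have hjlt := Finset.mem_range.mp hj
      have h2 : (1 : ℕ) < θ j := by have := hθ1 j (by omega); omega
      have := Finset.sum_lt_sum (f := fun _ => (1 : ℕ)) (g := θ)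
        (fun i hi => hθ1 i (by have := Finset.mem_range.mp hi; omega)) ⟨j, hj, h2⟩
      simp only [Finset.sum_const, Finset.card_range, smul_eq_mul, mul_one] at this
      omega
    have hdirall : ∀ j ≤ n - 2, dir j = true := by
      intro j hj
      rw [hconst j hj, ← hconst (n - 2) (le_refl _), hdirlast]
    have harc : ∀ k, k + 1 < n → arcδ n hn0 w k = 1 := by
      intro k hk
      have hd : arcδ n hn0 w k < n := of_decide_eq_true (hdirall k (by omega))
      have := hone k (Finset.mem_range.mpr (by omega))
      rw [hθ_def] at this
      unfold thetaW at this
      rw [if_pos hd] at this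
      exact this
    refine ⟨posOf n hn0 w 0, fun i => ?_⟩
    rw [word_of_const hn0 w 1 harc i, one_mul]
  -- rank 2(n-2) implies negative
  have claimB : rk n hn0 w = 2 * (n - 2) → isNegWord n w := by
    intro h0
    have hbd := RkAux.bound (n := n) (dir := dir) (θ := θ) (k := n - 2) hθlt
    rw [RkAux.F, ← hR_def] at hbd
    have hF : 2 * (R.2.1 + R.2.2 / n) + R.1 = 2 * (n - 2) + 1 := by omega
    have hconst : ∀ j ≤ n - 2, dir j = dir 0 := by
      apply RkAux.eq_max hθlt
      rw [RkAux.F, ← hR_def]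
      have : 2 * (n - 2) + 1 = 2 * (n - 2) + 1 := rfl
      omega
    have hEval := RkAux.const_eval (n := n) (θ := θ) hconst
    rw [← hR_def] at hEval
    rw [hEval] at hF
    simp only [] at hF
    have hrange : n - 2 + 1 = n - 1 := by omega
    rw [hrange] at hEval hF
    set Sθ := ∑ j ∈ Finset.range (n - 1), θ j with hS2_def
    have hS2div : Sθ / n = n - 2 := by omega
    have hS2ub : Sθ ≤ (n - 1) * (n - 1) := by
      calc Sθ ≤ ∑ _j ∈ Finset.range (n - 1), (n - 1) :=
        Finset.sum_le_sum (fun j hj => by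
          have := hθlt j (by have := Finset.mem_range.mp hj; omega); omega)
      _ = (n - 1) * (n - 1) := by simp [mul_comm]
    have hS2lb : n * (n - 2) ≤ Sθ := by
      have h := Nat.div_mul_le_self Sθ n
      rw [hS2div] at h
      calc n * (n - 2) = (n - 2) * n := by ring
      _ ≤ Sθ := h
    have hsq : (n - 1) * (n - 1) = n * (n - 2) + 1 := by
      obtain ⟨m, hm⟩ : ∃ m, n = m + 2 := ⟨n - 2, by omega⟩
      subst hm
      show (m + 1) * (m + 1) = (m + 2) * m + 1
      ring
    have hdirall : ∀ j ≤ n - 2, dir j = true := by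
      intro j hj
      rw [hconst j hj, ← hconst (n - 2) (le_refl _), hdirlast]
    have harcθ : ∀ j, j + 1 < n → arcδ n hn0 w j = θ j := by
      intro j hj
      have hd : arcδ n hn0 w j < n := of_decide_eq_true (hdirall j (by omega))
      rw [hθ_def]
      unfold thetaW
      rw [if_pos hd]
    -- telescoping
    have htel : posOf n hn0 w (n - 1) = posOf n hn0 w 0 + ((Sθ : ℕ) : ZMod (2 * n)) := by
      rw [posOf_telescope hn0 w (n - 1), hS2_def]
      congr 2
      exact Finset.sum_congr rfl (fun j hj => harcθ j (by
        have := Finset.mem_range.mp hj; omega))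
    have hne1 : posOf n hn0 w (n - 1) ≠ posOf n hn0 w 0 := by
      intro h
      have := posOf_inj hn0 w (i := n - 1) (j := 0) (by omega) (by omega) h
      omega
    have hne2 : posOf n hn0 w (n - 1) ≠ posOf n hn0 w 0 + (n : ZMod (2 * n)) :=
      posOf_ne_antipode hn0 w hadm (by omega) (by omega)
    have hS2eq : Sθ = (n - 1) * (n - 1) := by
      rcases Nat.lt_or_ge Sθ ((n - 1) * (n - 1)) with hlt | hge
      · exfalso
        have hS20 : Sθ = n * (n - 2) := by omega
        rcases Nat.even_or_odd (n - 2) with ⟨e, he⟩ | ⟨e, he⟩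
        · have hc : ((Sθ : ℕ) : ZMod (2 * n)) = 0 := by
            have h2 : Sθ = 2 * n * e := by rw [hS20, he]; ring
            rw [h2, Nat.cast_mul, ZMod.natCast_self, zero_mul]
          exact hne1 (by rw [htel, hc, add_zero])
        · have hc : ((Sθ : ℕ) : ZMod (2 * n)) = (n : ZMod (2 * n)) := by
            have h2 : Sθ = 2 * n * e + n := by rw [hS20, he]; ring
            rw [h2, Nat.cast_add, Nat.cast_mul, ZMod.natCast_self, zero_mul, zero_add]
          exact hne2 (by rw [htel, hc])
      · omega
    have hallθ : ∀ j ∈ Finset.range (n - 1), θ j = n - 1 := by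
      intro j hj
      by_contra hne
      have hjlt := Finset.mem_range.mp hj
      have h2 : θ j < n - 1 := by have := hθlt j (by omega); omega
      have := Finset.sum_lt_sum (f := θ) (g := fun _ => (n - 1 : ℕ))
        (fun i hi => show θ i ≤ n - 1 by
          have := hθlt i (by have := Finset.mem_range.mp hi; omega); omega)
        ⟨j, hj, h2⟩
      simp only [Finset.sum_const, Finset.card_range, smul_eq_mul] at this
      rw [← hS2_def] at this
      omega
    have harc : ∀ k, k + 1 < n → arcδ n hn0 w k = n - 1 := by
      intro k hk
      rw [harcθ k hk]
      exact hallθ k (Finset.mem_range.mpr (by omega))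
    exact ⟨posOf n hn0 w 0, fun i => word_of_const hn0 w (n - 1) harc i⟩
  -- bound
  have hbd := RkAux.bound (n := n) (dir := dir) (θ := θ) (k := n - 2) hθlt
  rw [RkAux.F, ← hR_def] at hbd
  have hrkbd : rk n hn0 w ≤ 2 * (n - 2) := by omega
  -- parity
  have partd : (arcδ n hn0 w 0 < n ↔ Even (rk n hn0 w)) := by
    have hpar := RkAux.parity (n := n) (dir := dir) (θ := θ) (n - 2)
    rw [← hR_def, hdirlast] at hpar
    have h1 : Even (rk n hn0 w) ↔ Odd R.1 := by
      rw [Nat.even_iff, Nat.odd_iff]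
      omega
    rw [h1, hpar, eq_comm]
    have : dir 0 = decide (arcδ n hn0 w 0 < n) := rfl
    rw [this, decide_eq_true_iff]
  refine ⟨parta, partb, fun hpos hneg => ?_, partd⟩
  constructor
  · rcases Nat.eq_zero_or_pos (rk n hn0 w) with h | h
    · exact absurd (claimA h) hpos
    · exact h
  · rcases Nat.lt_or_ge (rk n hn0 w) (2 * (n - 2)) with h | h
    · exact h
    · exact absurd (claimB (by omega)) hneg
end
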